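/- arXiv:1905.07494 — 5 statements merged into one kernel-verified Lean document; each statement's English description precedes it below -/
import Mathlib

section
/- Let G = H⟨a⟩ where H is a normal nilpotent subgroup of nilpotency class c and a is an n-Engel element of G (i.e., [x, a, a, ..., a] = 1 with a repeated n times, for all x ∈ G). Then G is nilpotent of class at most cn. -/
/-- The left-normed iterated commutator `[x, g, g, ..., g]` with `g` repeated `n` times,
using the convention `[a, b] = a⁻¹ * b⁻¹ * a * b`. -/
def engel {G : Type*} [Group G] (x g : G) : ℕ → G
  | 0 => x
  | n + 1 => (engel x g n)⁻¹ * g⁻¹ * engel x g n * g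


open Subgroup
open scoped commutatorElement

section Prelim

variable {G G' : Type*} [Group G] [Group G']

lemma engel_map (f : G →* G') (x g : G) : ∀ k : ℕ, f (engel x g k) = engel (f x) (f g) k
  | 0 => rfl
  | (k+1) => by
      simp only [engel, map_mul, map_inv, engel_map f x g k]

lemma lcs_map_surj (f : G →* G') (hf : Function.Surjective f) :
    ∀ k : ℕ, ((⊤ : Subgroup G).lowerCentralSeries k).map f = (⊤ : Subgroup G').lowerCentralSeries k
  | 0 => by simpa using Subgroup.map_top_of_surjective f hf
  | (k+1) => by
      show ((⁅(⊤ : Subgroup G).lowerCentralSeries k, ⊤⁆ : Subgroup G).map f) = ⁅(⊤ : Subgroup G').lowerCentralSeries k, ⊤⁆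
      rw [Subgroup.map_commutator, lcs_map_surj f hf k, Subgroup.map_top_of_surjective f hf]

end Prelim


section Core

variable {G : Type*} [Group G] (a : G) (A : Subgroup G)

lemma conj_inv_mem (hAn : A.Normal) (x : ↥A) : a⁻¹ * (x : G) * a ∈ A := by
  simpa using hAn.conj_mem _ x.2 a⁻¹

lemma phi_elt_mem (hAn : A.Normal) (x : ↥A) : (x : G)⁻¹ * a⁻¹ * x * a ∈ A := by
  simpa [mul_assoc] using A.mul_mem (A.inv_mem x.2) (conj_inv_mem a A hAn x)

/-- The map `x ↦ [x, a]` on an abelian normal subgroup `A`, as an endomorphism. -/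
def engelPhi (hAn : A.Normal) (hab : ∀ x ∈ A, ∀ y ∈ A, x * y = y * x) : Monoid.End ↥A where
  toFun x := ⟨(x : G)⁻¹ * a⁻¹ * x * a, phi_elt_mem a A hAn x⟩
  map_one' := by ext; simp
  map_mul' x y := by
    ext
    have hcomm : ((x : G)⁻¹ * a⁻¹ * x * a) * (y : G)⁻¹ = (y : G)⁻¹ * ((x : G)⁻¹ * a⁻¹ * x * a) :=
      hab _ (phi_elt_mem a A hAn x) _ (A.inv_mem y.2)
    push_cast
    calc ((x : G) * y)⁻¹ * a⁻¹ * (x * y) * a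
        = ((y : G)⁻¹ * ((x : G)⁻¹ * a⁻¹ * ↑x * a)) * ((y : G) * ((y : G)⁻¹ * a⁻¹ * ↑y * a)) := by
          group
      _ = (((x : G)⁻¹ * a⁻¹ * ↑x * a) * (y : G)⁻¹) * ((y : G) * ((y : G)⁻¹ * a⁻¹ * ↑y * a)) := by
          rw [hcomm]
      _ = ((x : G)⁻¹ * a⁻¹ * x * a) * ((y : G)⁻¹ * a⁻¹ * y * a) := by group

/-- Conjugation by `a` as an automorphism of the normal subgroup `A`. -/
def engelSigma (hAn : A.Normal) : ↥A ≃* ↥A where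
  toFun x := ⟨a⁻¹ * x * a, conj_inv_mem a A hAn x⟩
  invFun x := ⟨a * x * a⁻¹, hAn.conj_mem _ x.2 a⟩
  left_inv x := by ext; simp [mul_assoc]
  right_inv x := by ext; simp [mul_assoc]
  map_mul' x y := by ext; push_cast; group

variable (hAn : A.Normal) (hab : ∀ x ∈ A, ∀ y ∈ A, x * y = y * x)

lemma engelPhi_sigma_comm (x : ↥A) :
    engelPhi a A hAn hab (engelSigma a A hAn x) = engelSigma a A hAn (engelPhi a A hAn hab x) := by
  ext
  show ((a⁻¹ * (x:G) * a)⁻¹ * a⁻¹ * (a⁻¹ * x * a) * a) = a⁻¹ * ((x:G)⁻¹ * a⁻¹ * x * a) * a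
  group

lemma engelPhi_sigma_symm_comm (x : ↥A) :
    engelPhi a A hAn hab ((engelSigma a A hAn).symm x)
      = (engelSigma a A hAn).symm (engelPhi a A hAn hab x) := by
  ext
  show ((a * (x:G) * a⁻¹)⁻¹ * a⁻¹ * (a * x * a⁻¹) * a) = a * ((x:G)⁻¹ * a⁻¹ * x * a) * a⁻¹
  group

lemma engelPhi_pow_sigma_comm (j : ℕ) (x : ↥A) :
    (engelPhi a A hAn hab ^ j) (engelSigma a A hAn x)
      = engelSigma a A hAn ((engelPhi a A hAn hab ^ j) x) := by
  induction j generalizing x with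
  | zero => rfl
  | succ j ih =>
      calc (engelPhi a A hAn hab ^ (j+1)) (engelSigma a A hAn x)
          = (engelPhi a A hAn hab ^ j) (engelPhi a A hAn hab (engelSigma a A hAn x)) := by
            rw [pow_succ]; rfl
        _ = (engelPhi a A hAn hab ^ j) (engelSigma a A hAn (engelPhi a A hAn hab x)) := by
            rw [engelPhi_sigma_comm]
        _ = engelSigma a A hAn ((engelPhi a A hAn hab ^ j) (engelPhi a A hAn hab x)) := ih (engelPhi a A hAn hab x)
        _ = engelSigma a A hAn ((engelPhi a A hAn hab ^ (j+1)) x) := by rw [pow_succ]; rfl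

lemma engelPhi_pow_sigma_symm_comm (j : ℕ) (x : ↥A) :
    (engelPhi a A hAn hab ^ j) ((engelSigma a A hAn).symm x)
      = (engelSigma a A hAn).symm ((engelPhi a A hAn hab ^ j) x) := by
  induction j generalizing x with
  | zero => rfl
  | succ j ih =>
      calc (engelPhi a A hAn hab ^ (j+1)) ((engelSigma a A hAn).symm x)
          = (engelPhi a A hAn hab ^ j) (engelPhi a A hAn hab ((engelSigma a A hAn).symm x)) := by
            rw [pow_succ]; rfl
        _ = (engelPhi a A hAn hab ^ j) ((engelSigma a A hAn).symm (engelPhi a A hAn hab x)) := by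
            rw [engelPhi_sigma_symm_comm]
        _ = (engelSigma a A hAn).symm ((engelPhi a A hAn hab ^ j) (engelPhi a A hAn hab x)) := ih (engelPhi a A hAn hab x)
        _ = (engelSigma a A hAn).symm ((engelPhi a A hAn hab ^ (j+1)) x) := by rw [pow_succ]; rfl


@[simp] lemma engelPhi_apply_coe (x : ↥A) :
    (engelPhi a A hAn hab x : G) = (x : G)⁻¹ * a⁻¹ * x * a := rfl

@[simp] lemma engelSigma_apply_coe (x : ↥A) :
    (engelSigma a A hAn x : G) = a⁻¹ * x * a := rfl

@[simp] lemma engelSigma_symm_apply_coe (x : ↥A) :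
    ((engelSigma a A hAn).symm x : G) = a * x * a⁻¹ := rfl

/-- The subgroup of `G` of values of the `j`-fold iterate of `x ↦ [x,a]` on `A`. -/
def engelB (j : ℕ) : Subgroup G :=
  ((engelPhi a A hAn hab ^ j : ↥A →* ↥A).range).map A.subtype

lemma engelB_zero : engelB a A hAn hab 0 = A := by
  have h1 : (engelPhi a A hAn hab ^ 0 : ↥A →* ↥A).range = ⊤ := by
    rw [eq_top_iff]
    intro x _
    exact ⟨x, rfl⟩
  unfold engelB
  erw [h1]
  rw [← MonoidHom.range_eq_map, Subgroup.range_subtype]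

lemma engelB_le (j : ℕ) : engelB a A hAn hab j ≤ A := map_subtype_le _

lemma engelB_mem_of (j : ℕ) (y : ↥A) (hy : y ∈ (engelPhi a A hAn hab ^ j : ↥A →* ↥A).range) :
    (y : G) ∈ engelB a A hAn hab j := mem_map_of_mem _ hy

lemma engelB_range_sigma (j : ℕ) (y : ↥A)
    (hy : y ∈ (engelPhi a A hAn hab ^ j : ↥A →* ↥A).range) :
    engelSigma a A hAn y ∈ (engelPhi a A hAn hab ^ j : ↥A →* ↥A).range := by
  obtain ⟨z, rfl⟩ := hy
  exact ⟨engelSigma a A hAn z, (engelPhi_pow_sigma_comm a A hAn hab j z).symm ▸ rfl⟩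

lemma engelB_range_sigma_symm (j : ℕ) (y : ↥A)
    (hy : y ∈ (engelPhi a A hAn hab ^ j : ↥A →* ↥A).range) :
    (engelSigma a A hAn).symm y ∈ (engelPhi a A hAn hab ^ j : ↥A →* ↥A).range := by
  obtain ⟨z, rfl⟩ := hy
  exact ⟨(engelSigma a A hAn).symm z, (engelPhi_pow_sigma_symm_comm a A hAn hab j z).symm ▸ rfl⟩



lemma engelB_normal (H : Subgroup G) (hgen : H ⊔ Subgroup.closure {a} = ⊤)
    (hcent : ∀ x ∈ A, ∀ h ∈ H, x * h = h * x) (j : ℕ) :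
    (engelB a A hAn hab j).Normal := by
  rw [← normalizer_eq_top_iff, eq_top_iff, ← hgen, sup_le_iff]
  constructor
  · intro h hh
    rw [mem_normalizer_iff]
    intro x
    constructor
    · intro hx
      have hxA : x ∈ A := engelB_le a A hAn hab j hx
      have heq : h * x * h⁻¹ = x := by
        rw [← hcent x hxA h hh]; group
      rwa [heq]
    · intro hx
      have hxA : h * x * h⁻¹ ∈ A := engelB_le a A hAn hab j hx
      have h1 := hcent _ hxA h hh
      have h2 : (h * x * h⁻¹) * h = h * x := by group
      rw [h2] at h1
      have heq : x = h * x * h⁻¹ := mul_left_cancel h1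
      rwa [← heq] at hx
  · rw [closure_le]
    intro g hg
    rw [Set.mem_singleton_iff] at hg
    rw [hg]
    rw [SetLike.mem_coe, mem_normalizer_iff]
    intro x
    constructor
    · rintro hx
      rw [engelB, mem_map] at hx
      obtain ⟨y, hy, rfl⟩ := hx
      have heq : a * (A.subtype y : G) * a⁻¹ = (((engelSigma a A hAn).symm y : ↥A) : G) := by
        simp
      rw [heq]
      exact engelB_mem_of a A hAn hab j _ (engelB_range_sigma_symm a A hAn hab j y hy)
    · intro hx
      rw [engelB, mem_map] at hx
      obtain ⟨y, hy, hyx⟩ := hx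
      have hxe : x = ((engelSigma a A hAn y : ↥A) : G) := by
        rw [engelSigma_apply_coe]
        have : (y : G) = A.subtype y := rfl
        rw [this, hyx]; group
      rw [hxe]
      exact engelB_mem_of a A hAn hab j _ (engelB_range_sigma a A hAn hab j y hy)

lemma engelB_comm_a (H : Subgroup G) (hgen : H ⊔ Subgroup.closure {a} = ⊤)
    (hcent : ∀ x ∈ A, ∀ h ∈ H, x * h = h * x) (j : ℕ) (b : G)
    (hb : b ∈ engelB a A hAn hab j) :
    ⁅b, a⁆ ∈ engelB a A hAn hab (j + 1) := by
  rw [engelB, mem_map] at hb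
  obtain ⟨y, hy, rfl⟩ := hb
  have hmem : engelPhi a A hAn hab ((engelSigma a A hAn).symm y)
      ∈ (engelPhi a A hAn hab ^ (j+1) : ↥A →* ↥A).range := by
    obtain ⟨z, hz⟩ := engelB_range_sigma_symm a A hAn hab j y hy
    refine ⟨z, ?_⟩
    rw [pow_succ']
    show engelPhi a A hAn hab ((engelPhi a A hAn hab ^ j) z) = _
    exact congrArg _ hz
  have hid : ⁅(A.subtype y : G), a⁆
      = (y : G) * ((engelPhi a A hAn hab ((engelSigma a A hAn).symm y) : ↥A) : G) * (y : G)⁻¹ := by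
    simp [commutatorElement_def]
    group
  rw [hid]
  exact (engelB_normal a A hAn hab H hgen hcent (j+1)).conj_mem _
    (engelB_mem_of a A hAn hab (j+1) _ hmem) _

/-- For fixed `b`, if `⁅b, h⁆ ∈ K` for the generators of `G`, then for all `g`. -/
lemma commutator_mem_of_gen (H : Subgroup G) (hgen : H ⊔ Subgroup.closure {a} = ⊤)
    (K : Subgroup G) (hK : K.Normal) (b : G)
    (hH : ∀ h ∈ H, ⁅b, h⁆ ∈ K) (ha : ⁅b, a⁆ ∈ K) : ∀ g : G, ⁅b, g⁆ ∈ K := by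
  intro g
  let T : Subgroup G :=
    { carrier := {g | ⁅b, g⁆ ∈ K}
      one_mem' := by
        show ⁅b, (1 : G)⁆ ∈ K
        rw [commutatorElement_one_right]
        exact K.one_mem
      mul_mem' := by
        intro u v hu hv
        simp only [Set.mem_setOf_eq] at *
        have hid : ⁅b, u * v⁆ = ⁅b, u⁆ * (u * ⁅b, v⁆ * u⁻¹) := by
          simp only [commutatorElement_def]; group
        rw [hid]
        exact K.mul_mem hu (hK.conj_mem _ hv u)
      inv_mem' := by
        intro u hu
        simp only [Set.mem_setOf_eq] at *
        have hid : ⁅b, u⁻¹⁆ = u⁻¹ * ⁅b, u⁆⁻¹ * u := by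
          simp only [commutatorElement_def]; group
        rw [hid]
        simpa using hK.conj_mem _ (K.inv_mem hu) u⁻¹ }
  have hT : ⊤ ≤ T := by
    rw [← hgen, sup_le_iff]
    constructor
    · intro h hh
      exact hH h hh
    · rw [closure_le]
      rintro g rfl
      exact ha
  exact hT (mem_top g)

lemma engelB_step (H : Subgroup G) (hgen : H ⊔ Subgroup.closure {a} = ⊤)
    (hcent : ∀ x ∈ A, ∀ h ∈ H, x * h = h * x) (j : ℕ) :
    ⁅engelB a A hAn hab j, (⊤ : Subgroup G)⁆ ≤ engelB a A hAn hab (j+1) := by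
  rw [commutator_le]
  intro b hb g _
  refine commutator_mem_of_gen a H hgen _ (engelB_normal a A hAn hab H hgen hcent (j+1))
    b ?_ ?_ g
  · intro h hh
    have hbA : b ∈ A := engelB_le a A hAn hab j hb
    have h1 : ⁅b, h⁆ = 1 := by
      rw [commutatorElement_eq_one_iff_mul_comm]
      exact hcent b hbA h hh
    rw [h1]
    exact (engelB a A hAn hab (j+1)).one_mem
  · exact engelB_comm_a a A hAn hab H hgen hcent j b hb


lemma engelPhi_pow_coe (j : ℕ) (x : ↥A) :
    ((engelPhi a A hAn hab ^ j : ↥A →* ↥A) x : G) = engel (x : G) a j := by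
  induction j with
  | zero => rfl
  | succ j ih =>
      have h1 : (engelPhi a A hAn hab ^ (j+1) : ↥A →* ↥A) x
          = engelPhi a A hAn hab ((engelPhi a A hAn hab ^ j : ↥A →* ↥A) x) := by
        rw [pow_succ']; rfl
      rw [h1, engelPhi_apply_coe, ih]
      rfl

lemma engelB_bot (n : ℕ) (hEngel : ∀ x : G, engel x a n = 1) :
    engelB a A hAn hab n = ⊥ := by
  rw [engelB, eq_bot_iff]
  intro x hx
  rw [mem_map] at hx
  obtain ⟨y, ⟨z, hz⟩, rfl⟩ := hx
  have h1 : (y : G) = engel (z : G) a n := by rw [← hz]; exact engelPhi_pow_coe a A hAn hab n z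
  rw [mem_bot]
  show (y : G) = 1
  rw [h1, hEngel]

lemma engelB_chain (H : Subgroup G) (hgen : H ⊔ Subgroup.closure {a} = ⊤)
    (hcent : ∀ x ∈ A, ∀ h ∈ H, x * h = h * x) (m j₀ : ℕ)
    (h0 : (⊤ : Subgroup G).lowerCentralSeries m ≤ engelB a A hAn hab j₀) :
    ∀ j, (⊤ : Subgroup G).lowerCentralSeries (m + j) ≤ engelB a A hAn hab (j₀ + j) := by
  intro j
  induction j with
  | zero => exact h0
  | succ j ih =>
      have h1 : (⊤ : Subgroup G).lowerCentralSeries (m + (j+1)) = ⁅(⊤ : Subgroup G).lowerCentralSeries (m + j), ⊤⁆ := rfl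
      rw [h1]
      calc ⁅(⊤ : Subgroup G).lowerCentralSeries (m + j), (⊤ : Subgroup G)⁆
          ≤ ⁅engelB a A hAn hab (j₀ + j), (⊤ : Subgroup G)⁆ := commutator_mono ih le_rfl
        _ ≤ engelB a A hAn hab (j₀ + j + 1) := engelB_step a A hAn hab H hgen hcent _

lemma engelB_first_step (H : Subgroup G) (hgen : H ⊔ Subgroup.closure {a} = ⊤)
    (hcent : ∀ x ∈ A, ∀ h ∈ H, x * h = h * x) (hHA : H ≤ A) :
    ⁅(⊤ : Subgroup G), (⊤ : Subgroup G)⁆ ≤ engelB a A hAn hab 1 := by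
  have hnorm := engelB_normal a A hAn hab H hgen hcent 1
  rw [commutator_le]
  intro x hx g _
  let U : Subgroup G :=
    { carrier := {x | ∀ g : G, ⁅x, g⁆ ∈ engelB a A hAn hab 1}
      one_mem' := by
        intro g
        rw [commutatorElement_one_left]
        exact (engelB a A hAn hab 1).one_mem
      mul_mem' := by
        intro u v hu hv
        simp only [Set.mem_setOf_eq] at *
        intro g
        have hid : ⁅u * v, g⁆ = (u * ⁅v, g⁆ * u⁻¹) * ⁅u, g⁆ := by
          simp only [commutatorElement_def]; group
        rw [hid]
        exact (engelB a A hAn hab 1).mul_mem (hnorm.conj_mem _ (hv g) u) (hu g)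
      inv_mem' := by
        intro u hu
        simp only [Set.mem_setOf_eq] at *
        intro g
        have hid : ⁅u⁻¹, g⁆ = u⁻¹ * ⁅u, g⁆⁻¹ * u := by
          simp only [commutatorElement_def]; group
        rw [hid]
        simpa using hnorm.conj_mem _ ((engelB a A hAn hab 1).inv_mem (hu g)) u⁻¹ }
  have hT : ⊤ ≤ U := by
    rw [← hgen, sup_le_iff]
    constructor
    · intro h hh
      show ∀ g : G, ⁅h, g⁆ ∈ engelB a A hAn hab 1
      refine commutator_mem_of_gen a H hgen _ hnorm h ?_ ?_
      · intro h' hh'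
        have h1 : ⁅h, h'⁆ = 1 := by
          rw [commutatorElement_eq_one_iff_mul_comm]
          exact hcent h (hHA hh) h' hh'
        rw [h1]
        exact (engelB a A hAn hab 1).one_mem
      · have hh0 : h ∈ engelB a A hAn hab 0 := by
          rw [engelB_zero]
          exact hHA hh
        exact engelB_comm_a a A hAn hab H hgen hcent 0 h hh0
    · rw [closure_le]
      intro g hg
      rw [Set.mem_singleton_iff] at hg
      rw [hg]
      show ∀ g : G, ⁅a, g⁆ ∈ engelB a A hAn hab 1
      refine commutator_mem_of_gen a H hgen _ hnorm a ?_ ?_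
      · intro h' hh'
        have hh0 : h' ∈ engelB a A hAn hab 0 := by
          rw [engelB_zero]
          exact hHA hh'
        have h1 := engelB_comm_a a A hAn hab H hgen hcent 0 h' hh0
        have h2 : ⁅a, h'⁆ = ⁅h', a⁆⁻¹ := by
          simp only [commutatorElement_def]; group
        rw [h2]
        exact (engelB a A hAn hab 1).inv_mem h1
      · rw [commutatorElement_self]
        exact (engelB a A hAn hab 1).one_mem
  exact hT (mem_top x) g

end Core

section Assemble

universe u

variable {G : Type u} [Group G]

lemma core_bot (H : Subgroup G) (a : G) (hgen : H ⊔ Subgroup.closure {a} = ⊤)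
    (A : Subgroup G) (hAn : A.Normal) (hAle : A ≤ H)
    (hcent : ∀ x ∈ A, ∀ h ∈ H, x * h = h * x)
    (n m : ℕ) (hEngel : ∀ x : G, engel x a n = 1)
    (hm : (⊤ : Subgroup G).lowerCentralSeries m ≤ A) :
    (⊤ : Subgroup G).lowerCentralSeries (m + n) = ⊥ := by
  have hab : ∀ x ∈ A, ∀ y ∈ A, x * y = y * x := fun x hx y hy => hcent x hx y (hAle hy)
  have h0 : (⊤ : Subgroup G).lowerCentralSeries m ≤ engelB a A hAn hab 0 := by
    rw [engelB_zero]; exact hm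
  have h1 := engelB_chain a A hAn hab H hgen hcent m 0 h0 n
  rw [zero_add, engelB_bot a A hAn hab n hEngel, le_bot_iff] at h1
  exact h1

lemma core_base (H : Subgroup G) (hN : H.Normal) (a : G)
    (hgen : H ⊔ Subgroup.closure {a} = ⊤)
    (hcomm : ∀ x ∈ H, ∀ y ∈ H, x * y = y * x)
    (n : ℕ) (hn : 0 < n) (hEngel : ∀ x : G, engel x a n = 1) :
    (⊤ : Subgroup G).lowerCentralSeries n = ⊥ := by
  have h1 : (⊤ : Subgroup G).lowerCentralSeries 1 ≤ engelB a H hN hcomm 1 := by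
    have := engelB_first_step a H hN hcomm H hgen hcomm le_rfl
    exact this
  obtain ⟨k, rfl⟩ : ∃ k, n = 1 + k := ⟨n - 1, by omega⟩
  have h2 := engelB_chain a H hN hcomm H hgen hcomm 1 1 h1 k
  have h3 := engelB_bot a H hN hcomm (1 + k) hEngel
  rw [h3, le_bot_iff] at h2
  exact h2

lemma aux_main : ∀ (c : ℕ), 0 < c → ∀ (G : Type u) (_ : Group G) (H : Subgroup G)
    (_ : H.Normal) (a : G) (n : ℕ), 0 < n → (H ⊔ Subgroup.closure {a} = ⊤) →
    (⊤ : Subgroup ↥H).lowerCentralSeries c = ⊥ → (∀ x : G, engel x a n = 1) →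
    (⊤ : Subgroup G).lowerCentralSeries (c * n) = ⊥ := by
  intro c hc
  induction c, hc using Nat.le_induction with
  | base =>
      intro G _ H hN a n hn hgen hclass hEngel
      have hcomm : ∀ x ∈ H, ∀ y ∈ H, x * y = y * x := by
        intro x hx y hy
        have h1 : ⁅(⟨x, hx⟩ : ↥H), (⟨y, hy⟩ : ↥H)⁆ ∈ (⊤ : Subgroup ↥H).lowerCentralSeries 1 := by
          rw [top_lowerCentralSeries_one]
          exact commutator_mem_commutator (mem_top _) (mem_top _)
        rw [hclass, mem_bot, commutatorElement_eq_one_iff_mul_comm] at h1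
        have := congrArg (Subtype.val) h1
        push_cast at this
        exact this
      rw [show Nat.succ 0 * n = n by omega]
      exact core_base H hN a hgen hcomm n hn hEngel
  | succ c hc ih =>
      intro G _ H hN a n hn hgen hclass hEngel
      set N : Subgroup G := ((⊤ : Subgroup ↥H).lowerCentralSeries c).map H.subtype with hN_def
      have hNle : N ≤ H := map_subtype_le _
      have hNnormal : N.Normal := by
        constructor
        intro x hx g
        rw [hN_def, mem_map] at hx ⊢
        obtain ⟨y, hy, rfl⟩ := hx
        refine ⟨MulAut.conjNormal g y, ?_, ?_⟩
        · have hsurj : Function.Surjective ((MulAut.conjNormal g).toMonoidHom : ↥H →* ↥H) :=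
            (MulAut.conjNormal g).surjective
          have := lcs_map_surj ((MulAut.conjNormal g).toMonoidHom : ↥H →* ↥H) hsurj c
          rw [← this]
          exact mem_map_of_mem _ hy
        · simp
      -- commutation of N with H
      have hcent : ∀ x ∈ N, ∀ h ∈ H, x * h = h * x := by
        intro x hx h hh
        have hcomm_bot : ⁅N, H⁆ = ⊥ := by
          have hHmap : (⊤ : Subgroup ↥H).map H.subtype = H := by
            rw [← MonoidHom.range_eq_map, Subgroup.range_subtype]
          have h1 : ⁅N, H⁆ = (⁅(⊤ : Subgroup ↥H).lowerCentralSeries c, (⊤ : Subgroup ↥H)⁆).map H.subtype := by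
            rw [Subgroup.map_commutator, hHmap]
          have h2 : ⁅(⊤ : Subgroup ↥H).lowerCentralSeries c, (⊤ : Subgroup ↥H)⁆ = (⊤ : Subgroup ↥H).lowerCentralSeries (c+1) := rfl
          rw [h1, h2, hclass, Subgroup.map_bot]
        have h3 : ⁅x, h⁆ ∈ ⁅N, H⁆ := commutator_mem_commutator hx hh
        rw [hcomm_bot, mem_bot, commutatorElement_eq_one_iff_mul_comm] at h3
        exact h3
      -- pass to the quotient
      let Q := G ⧸ N
      let π : G →* Q := QuotientGroup.mk' N
      have hsurj : Function.Surjective π := QuotientGroup.mk'_surjective N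
      have hQclass : (⊤ : Subgroup ↥(H.map π)).lowerCentralSeries c = ⊥ := by
        have hfs := MonoidHom.subgroupMap_surjective π H
        have := lcs_map_surj (π.subgroupMap H) hfs c
        rw [← this, Subgroup.map_eq_bot_iff]
        intro y hy
        rw [MonoidHom.mem_ker]
        ext
        show π (y : G) = 1
        rw [QuotientGroup.mk'_apply, QuotientGroup.eq_one_iff]
        exact mem_map_of_mem _ hy
      have hQgen : (H.map π) ⊔ Subgroup.closure {π a} = ⊤ := by
        rw [← Set.image_singleton, ← MonoidHom.map_closure, ← Subgroup.map_sup, hgen,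
          Subgroup.map_top_of_surjective _ hsurj]
      have hQEngel : ∀ y : Q, engel y (π a) n = 1 := by
        intro y
        obtain ⟨x, rfl⟩ := hsurj y
        rw [← engel_map, hEngel, map_one]
      have hQ := ih Q inferInstance (H.map π) (hN.map π hsurj) (π a) n hn hQgen hQclass hQEngel
      -- pull back
      have hpull : (⊤ : Subgroup G).lowerCentralSeries (c * n) ≤ N := by
        have := lcs_map_surj π hsurj (c * n)
        rw [hQ, Subgroup.map_eq_bot_iff, QuotientGroup.ker_mk'] at this
        exact this
      have := core_bot H a hgen N hNnormal hNle hcent n (c * n) hEngel hpull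
      rw [Nat.succ_mul]
      exact this

end Assemble

/-- If `G = H⟨a⟩` with `H` normal nilpotent of class at most `c` and `a` an `n`-Engel
element of `G`, then `G` is nilpotent of class at most `c * n`. -/
theorem nilpotent_of_normal_nilpotent_and_engel_generator
    (G : Type*) [Group G] (H : Subgroup G) (hN : H.Normal) (a : G) (c n : ℕ)
    (hc : 0 < c) (hn : 0 < n)
    (hgen : H ⊔ Subgroup.closure {a} = ⊤)
    (hclass : (⊤ : Subgroup H).lowerCentralSeries c = ⊥)
    (hEngel : ∀ x : G, engel x a n = 1) :
    Group.IsNilpotent G ∧ (⊤ : Subgroup G).lowerCentralSeries (c * n) = ⊥ := by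
  have h := aux_main c hc G ‹_› H hN a n hn hgen hclass hEngel
  exact ⟨Subgroup.nilpotent_iff_lowerCentralSeries.mpr ⟨c * n, h⟩, h⟩
end

section
/- Let G = M⟨a⟩ be a profinite group where M is an abelian closed normal subgroup and a is an Engel element (for every x ∈ G there exists n with [x, a, ..., a] = 1, a repeated n times). Then G is nilpotent. -/
section EngelBasic
variable {G : Type*} [Group G]

lemma engel_zero (x g : G) : engel x g 0 = x := rfl

lemma engel_succ (x g : G) (n : ℕ) :
    engel x g (n + 1) = (engel x g n)⁻¹ * g⁻¹ * engel x g n * g := rfl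

lemma engel_one_left (g : G) (n : ℕ) : engel 1 g n = 1 := by
  induction n with
  | zero => rfl
  | succ n ih => rw [engel_succ, ih]; group

lemma engel_comp (x g : G) (k n : ℕ) :
    engel (engel x g k) g n = engel x g (k + n) := by
  induction n with
  | zero => rfl
  | succ n ih => rw [engel_succ, ih, ← engel_succ, Nat.add_assoc]

lemma engel_map_s7 {H : Type*} [Group H] (φ : G →* H) (x g : G) (n : ℕ) :
    engel (φ x) (φ g) n = φ (engel x g n) := by
  induction n with
  | zero => rfl
  | succ n ih => simp [engel_succ, ih]

lemma engel_conj_of_commute {c g : G} (h : Commute c g) (x : G) (n : ℕ) :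
    engel (c * x * c⁻¹) g n = c * engel x g n * c⁻¹ := by
  have : ∀ y : G, (MulAut.conj c) y = c * y * c⁻¹ := fun y => rfl
  have hg : (MulAut.conj c) g = g := by
    rw [this, mul_assoc, ← h.inv_left.eq, mul_inv_cancel_left]
  calc engel (c * x * c⁻¹) g n = engel ((MulAut.conj c) x) ((MulAut.conj c) g) n := by rw [this, hg]
    _ = (MulAut.conj c) (engel x g n) := engel_map_s7 (MulAut.conj c).toMonoidHom x g n
    _ = c * engel x g n * c⁻¹ := this _

lemma engel_mem {M : Subgroup G} (hMn : M.Normal) {x : G} (hx : x ∈ M) (g : G) (n : ℕ) :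
    engel x g n ∈ M := by
  induction n with
  | zero => exact hx
  | succ n ih =>
    rw [engel_succ]
    have : (engel x g n)⁻¹ * (g⁻¹ * engel x g n * g) ∈ M :=
      M.mul_mem (M.inv_mem ih) (by simpa using hMn.conj_mem _ ih g⁻¹)
    simpa [mul_assoc] using this

end EngelBasic

section EngelHom
variable {G : Type*} [Group G]

def engelFun (M : Subgroup G) (hMn : M.Normal) (a : G) : ↥M → ↥M :=
  fun x => x⁻¹ * ⟨a⁻¹ * ↑x * a, by simpa using hMn.conj_mem _ x.2 a⁻¹⟩

lemma engelFun_coe (M : Subgroup G) (hMn : M.Normal) (a : G) (x : ↥M) :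
    (engelFun M hMn a x : G) = (↑x)⁻¹ * (a⁻¹ * ↑x * a) := rfl

/-- The endomorphism `x ↦ x⁻¹ · (a⁻¹ x a)` of an abelian normal subgroup `M`. -/
def engelHom (M : Subgroup G) (hMn : M.Normal)
    (hMab : ∀ x ∈ M, ∀ y ∈ M, x * y = y * x) (a : G) : Monoid.End ↥M where
  toFun := engelFun M hMn a
  map_one' := by
    refine Subtype.ext ?_
    rw [engelFun_coe]
    simp
  map_mul' x y := by
    refine Subtype.ext ?_
    rw [Submonoid.coe_mul, engelFun_coe, engelFun_coe, engelFun_coe, Submonoid.coe_mul]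
    have hx' : a⁻¹ * ↑x * a ∈ M := by simpa using hMn.conj_mem _ x.2 a⁻¹
    have h1 : (↑y : G)⁻¹ * (((↑x:G))⁻¹ * (a⁻¹ * ↑x * a)) =
        (((↑x:G))⁻¹ * (a⁻¹ * ↑x * a)) * (↑y)⁻¹ :=
      hMab _ (M.inv_mem y.2) _ (M.mul_mem (M.inv_mem x.2) hx')
    calc ((↑x:G) * ↑y)⁻¹ * (a⁻¹ * (↑x * ↑y) * a)
        = (↑y:G)⁻¹ * (((↑x:G))⁻¹ * (a⁻¹ * ↑x * a)) * (a⁻¹ * ↑y * a) := by group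
      _ = (((↑x:G))⁻¹ * (a⁻¹ * ↑x * a)) * ((↑y:G)⁻¹ * (a⁻¹ * ↑y * a)) := by
          rw [h1, mul_assoc]

lemma engelHom_coe (M : Subgroup G) (hMn : M.Normal)
    (hMab : ∀ x ∈ M, ∀ y ∈ M, x * y = y * x) (a : G) (x : ↥M) :
    ((engelHom M hMn hMab a x : ↥M) : G) = (↑x)⁻¹ * (a⁻¹ * ↑x * a) := rfl

lemma engel_eq_engelHom (M : Subgroup G) (hMn : M.Normal)
    (hMab : ∀ x ∈ M, ∀ y ∈ M, x * y = y * x) (a : G) (x : ↥M) (n : ℕ) :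
    engel (↑x) a n = ((((engelHom M hMn hMab a) ^ n) x : ↥M) : G) := by
  induction n with
  | zero => rfl
  | succ n ih =>
    rw [engel_succ, ih, pow_succ' (engelHom M hMn hMab a) n]
    show _ = ((engelHom M hMn hMab a) (((engelHom M hMn hMab a) ^ n) x) : G)
    rw [engelHom_coe]
    group

end EngelHom

section Cont
variable {G : Type*} [Group G] [TopologicalSpace G] [IsTopologicalGroup G]

lemma engel_continuous' (a : G) (n : ℕ) : Continuous fun x : G => engel x a n := by
  induction n with
  | zero => exact continuous_id
  | succ n ih =>
    show Continuous fun x : G => (engel x a n)⁻¹ * a⁻¹ * engel x a n * a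
    exact ((ih.inv.mul continuous_const).mul ih).mul continuous_const

end Cont

section Uniform
open Set
variable {G : Type*} [Group G] [TopologicalSpace G] [IsTopologicalGroup G]
  [CompactSpace G] [T2Space G]


lemma exists_uniform_engel_bound (M : Subgroup G) (hMn : M.Normal)
    (hMclosed : IsClosed (M : Set G))
    (hMab : ∀ x ∈ M, ∀ y ∈ M, x * y = y * x) (a : G)
    (hEngel : ∀ x : G, ∃ n : ℕ, engel x a n = 1) :
    ∃ N : ℕ, ∀ x ∈ M, engel x a N = 1 := by
  haveI : CompactSpace ↥M := isCompact_iff_compactSpace.mp hMclosed.isCompact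
  set φ : Monoid.End ↥M := engelHom M hMn hMab a with hφ
  have key : ∀ (x : ↥M) (n : ℕ), engel (↑x : G) a n = 1 ↔ (φ ^ n) x = 1 := by
    intro x n
    rw [engel_eq_engelHom M hMn hMab a x n]
    exact OneMemClass.coe_eq_one
  have hmono : ∀ (x : ↥M) (m k : ℕ), m ≤ k → (φ ^ m) x = 1 → (φ ^ k) x = 1 := by
    intro x m k hmk h1
    have : (φ ^ k) x = (⇑φ)^[k - m] ((⇑φ)^[m] x) := by
      rw [← Function.iterate_add_apply, Nat.sub_add_cancel hmk, ← Monoid.End.coe_pow]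
    rw [this]
    have h1' : (⇑φ)^[m] x = 1 := by rw [← Monoid.End.coe_pow]; exact h1
    rw [h1']
    exact iterate_map_one (φ : ↥M →* ↥M) (k - m)
  -- Baire
  have hclosed : ∀ n : ℕ, IsClosed {x : ↥M | engel (↑x : G) a n = 1} := fun n =>
    isClosed_singleton.preimage ((engel_continuous' a n).comp continuous_subtype_val)
  have hcover : (⋃ n : ℕ, {x : ↥M | engel (↑x : G) a n = 1}) = univ := by
    refine eq_univ_of_forall fun x => ?_
    obtain ⟨n, hn⟩ := hEngel (↑x : G)
    exact mem_iUnion.mpr ⟨n, hn⟩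
  obtain ⟨n0, hn0⟩ := nonempty_interior_of_iUnion_of_closed hclosed hcover
  have hkerset : {x : ↥M | engel (↑x : G) a n0 = 1} = ((φ ^ n0).ker : Set ↥M) := by
    ext x; exact key x n0
  rw [hkerset] at hn0
  obtain ⟨y, hy⟩ := hn0
  have hopen : IsOpen (((φ ^ n0).ker : Subgroup ↥M) : Set ↥M) :=
    Subgroup.isOpen_of_mem_nhds _ (mem_interior_iff_mem_nhds.mp hy)
  -- compactness: finitely many cosets
  have hUopen : ∀ z : ↥M, IsOpen ((fun w : ↥M => z⁻¹ * w) ⁻¹' ((φ ^ n0).ker : Set ↥M)) :=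
    fun z => hopen.preimage (continuous_const.mul continuous_id)
  have hUcover : (univ : Set ↥M) ⊆ ⋃ z : ↥M, (fun w : ↥M => z⁻¹ * w) ⁻¹' ((φ ^ n0).ker : Set ↥M) := by
    intro z _
    refine mem_iUnion.mpr ⟨z, ?_⟩
    simp
  obtain ⟨t, ht⟩ := isCompact_univ.elim_finite_subcover _ hUopen hUcover
  have hEM : ∀ z : ↥M, ∃ n, (φ ^ n) z = 1 := by
    intro z
    obtain ⟨n, hn⟩ := hEngel (↑z : G)
    exact ⟨n, (key z n).mp hn⟩
  classical
  set b : ↥M → ℕ := fun z => (hEM z).choose with hb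
  refine ⟨n0 + t.sup b, ?_⟩
  intro x hx
  set z : ↥M := ⟨x, hx⟩
  obtain ⟨i, hit, hiz⟩ : ∃ i ∈ t, z ∈ (fun w : ↥M => i⁻¹ * w) ⁻¹' ((φ ^ n0).ker : Set ↥M) := by
    have := ht (mem_univ z)
    simpa using this
  have h1 : (φ ^ (n0 + t.sup b)) (i⁻¹ * z) = 1 :=
    hmono _ n0 _ (Nat.le_add_right _ _) hiz
  have h2 : (φ ^ (n0 + t.sup b)) i = 1 :=
    hmono _ (b i) _ (le_trans (Finset.le_sup hit) (Nat.le_add_left _ _)) (hEM i).choose_spec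
  have : (φ ^ (n0 + t.sup b)) z = 1 := by
    have hz : z = i * (i⁻¹ * z) := by group
    rw [hz, map_mul, h1, h2, one_mul]
  exact (key z _).mpr this

end Uniform

section Ker
variable {G : Type*} [Group G]

/-- The subgroup of elements of `M` killed by `n` applications of `x ↦ [x,a]`. -/
def engelKer (M : Subgroup G) (hMn : M.Normal)
    (hMab : ∀ x ∈ M, ∀ y ∈ M, x * y = y * x) (a : G) (n : ℕ) : Subgroup G :=
  (((engelHom M hMn hMab a) ^ n).ker).map M.subtype

lemma mem_engelKer_iff (M : Subgroup G) (hMn : M.Normal)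
    (hMab : ∀ x ∈ M, ∀ y ∈ M, x * y = y * x) (a : G) (n : ℕ) (x : G) :
    x ∈ engelKer M hMn hMab a n ↔ x ∈ M ∧ engel x a n = 1 := by
  constructor
  · rintro ⟨y, hy, rfl⟩
    refine ⟨y.2, ?_⟩
    show engel (↑y) a n = 1
    rw [engel_eq_engelHom M hMn hMab a y n]
    rw [SetLike.mem_coe] at hy; replace hy : ((engelHom M hMn hMab a) ^ n) y = 1 := hy
    rw [hy]
    rfl
  · rintro ⟨hxM, hx⟩
    refine ⟨⟨x, hxM⟩, ?_, rfl⟩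
    rw [SetLike.mem_coe]; show ((engelHom M hMn hMab a) ^ n) ⟨x, hxM⟩ = 1
    have := engel_eq_engelHom M hMn hMab a ⟨x, hxM⟩ n
    rw [hx] at this
    exact (OneMemClass.coe_eq_one.mp this.symm)

lemma engelKer_set_eq (M : Subgroup G) (hMn : M.Normal)
    (hMab : ∀ x ∈ M, ∀ y ∈ M, x * y = y * x) (a : G) (n : ℕ) :
    (engelKer M hMn hMab a n : Set G) = (M : Set G) ∩ (fun x => engel x a n) ⁻¹' {1} := by
  ext x
  simp only [SetLike.mem_coe, mem_engelKer_iff, Set.mem_inter_iff, Set.mem_preimage,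
    Set.mem_singleton_iff]

lemma engelKer_closed [TopologicalSpace G] [IsTopologicalGroup G] [T2Space G] (M : Subgroup G) (hMn : M.Normal)
    (hMclosed : IsClosed (M : Set G))
    (hMab : ∀ x ∈ M, ∀ y ∈ M, x * y = y * x) (a : G) (n : ℕ) :
    IsClosed (engelKer M hMn hMab a n : Set G) := by
  rw [engelKer_set_eq]
  exact hMclosed.inter (isClosed_singleton.preimage (engel_continuous' a n))

end Ker

/-- Let `G = M⟨a⟩` be a profinite group with `M` an abelian closed normal subgroup and
`a` an Engel element. Then `G` is nilpotent. -/
theorem profinite_abelian_by_engel_element_nilpotent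
    (G : Type*) [Group G] [TopologicalSpace G] [IsTopologicalGroup G]
    [CompactSpace G] [T2Space G] [TotallyDisconnectedSpace G]
    (M : Subgroup G) (hMn : M.Normal) (hMclosed : IsClosed (M : Set G))
    (hMab : ∀ x ∈ M, ∀ y ∈ M, x * y = y * x) (a : G)
    (hgen : (M ⊔ Subgroup.closure {a}).topologicalClosure = ⊤)
    (hEngel : ∀ x : G, ∃ n : ℕ, engel x a n = 1) :
    Group.IsNilpotent G := by
  classical
  obtain ⟨N, hN⟩ := exists_uniform_engel_bound M hMn hMclosed hMab a hEngel
  set D : ℕ → Subgroup G := engelKer M hMn hMab a with hD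
  have hDmem : ∀ (n : ℕ) (x : G), x ∈ D n ↔ x ∈ M ∧ engel x a n = 1 :=
    fun n x => mem_engelKer_iff M hMn hMab a n x
  have hDclosed : ∀ n, IsClosed (D n : Set G) := fun n =>
    engelKer_closed M hMn hMclosed hMab a n
  have hDone : ∀ n, (1 : G) ∈ D n := fun n => (D n).one_mem
  have hTop : ∀ S : Subgroup G, IsClosed (S : Set G) → M ≤ S → a ∈ S → S = ⊤ := by
    intro S hc hMS haS
    have h1 : M ⊔ Subgroup.closure {a} ≤ S :=
      sup_le hMS ((Subgroup.closure_le S).mpr (by simpa using haS))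
    have h2 := Subgroup.topologicalClosure_minimal _ h1 hc
    rw [hgen] at h2
    exact top_le_iff.mp h2
  -- `D n` is stable under conjugation
  have hDnormal : ∀ (n : ℕ) (g : G), ∀ x ∈ D n, g * x * g⁻¹ ∈ D n := by
    intro n
    have hconj : ∀ c : G, Commute c a → ∀ x ∈ D n, c * x * c⁻¹ ∈ D n := by
      intro c hc x hx
      obtain ⟨hxM, hxe⟩ := (hDmem n x).mp hx
      refine (hDmem n _).mpr ⟨hMn.conj_mem x hxM c, ?_⟩
      rw [engel_conj_of_commute hc, hxe, mul_one, mul_inv_cancel]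
    set S : Subgroup G :=
      { carrier := {g | ∀ x ∈ D n, g * x * g⁻¹ ∈ D n ∧ g⁻¹ * x * g ∈ D n}
        one_mem' := by
          intro x hx
          constructor <;> · simpa using hx
        mul_mem' := by
          intro g h hg hh x hx
          constructor
          · have e : g * h * x * (g * h)⁻¹ = g * (h * x * h⁻¹) * g⁻¹ := by group
            rw [e]; exact (hg _ (hh x hx).1).1
          · have e : (g * h)⁻¹ * x * (g * h) = h⁻¹ * (g⁻¹ * x * g) * h := by group
            rw [e]; exact (hh _ (hg x hx).2).2
        inv_mem' := by
          intro g hg x hx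
          constructor
          · have e : g⁻¹ * x * g⁻¹⁻¹ = g⁻¹ * x * g := by group
            rw [e]; exact (hg x hx).2
          · have e : g⁻¹⁻¹ * x * g⁻¹ = g * x * g⁻¹ := by group
            rw [e]; exact (hg x hx).1 } with hSdef
    have hSmem : ∀ g : G, g ∈ S ↔ ∀ x ∈ D n, g * x * g⁻¹ ∈ D n ∧ g⁻¹ * x * g ∈ D n :=
      fun g => Iff.rfl
    have hSc : IsClosed (S : Set G) := by
      have : (S : Set G) = ⋂ x ∈ D n,
          ((fun g => g * x * g⁻¹) ⁻¹' (D n : Set G)) ∩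
            ((fun g => g⁻¹ * x * g) ⁻¹' (D n : Set G)) := by
        ext g
        simp only [SetLike.mem_coe, hSmem, Set.mem_iInter, Set.mem_inter_iff, Set.mem_preimage]
      rw [this]
      refine isClosed_iInter fun x => isClosed_iInter fun hx => IsClosed.inter ?_ ?_
      · exact (hDclosed n).preimage ((continuous_id.mul continuous_const).mul continuous_inv)
      · exact (hDclosed n).preimage ((continuous_inv.mul continuous_const).mul continuous_id)
    have hMS : M ≤ S := by
      intro m hm
      rw [hSmem]
      intro x hx
      obtain ⟨hxM, _⟩ := (hDmem n x).mp hx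
      have e1 : m * x * m⁻¹ = x := by
        rw [hMab m hm x hxM]; group
      have e2 : m⁻¹ * x * m = x := by
        rw [hMab m⁻¹ (M.inv_mem hm) x hxM]; group
      rw [e1, e2]; exact ⟨hx, hx⟩
    have haS : a ∈ S := by
      rw [hSmem]
      intro x hx
      exact ⟨hconj a (Commute.refl a) x hx, by
        simpa using hconj a⁻¹ ((Commute.refl a).inv_left) x hx⟩
    have := hTop S hSc hMS haS
    intro g x hx
    have hgS : g ∈ S := this ▸ Subgroup.mem_top g
    exact ((hSmem g).mp hgS x hx).1
  -- every commutator lies in M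
  have hcommM : ∀ g h : G, g * h * g⁻¹ * h⁻¹ ∈ M := by
    have hKA : ∀ h : G, a * h * a⁻¹ * h⁻¹ ∈ M := by
      set KA : Subgroup G :=
        { carrier := {h | a * h * a⁻¹ * h⁻¹ ∈ M}
          one_mem' := by
            show a * 1 * a⁻¹ * 1⁻¹ ∈ M
            have e : a * 1 * a⁻¹ * 1⁻¹ = 1 := by group
            rw [e]; exact M.one_mem
          mul_mem' := by
            intro h k hh hk
            show a * (h * k) * a⁻¹ * (h * k)⁻¹ ∈ M
            have e : a * (h * k) * a⁻¹ * (h * k)⁻¹ =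
                (a * h * a⁻¹ * h⁻¹) * (h * (a * k * a⁻¹ * k⁻¹) * h⁻¹) := by group
            rw [e]
            exact M.mul_mem hh (hMn.conj_mem _ hk h)
          inv_mem' := by
            intro h hh
            show a * h⁻¹ * a⁻¹ * h⁻¹⁻¹ ∈ M
            have e : a * h⁻¹ * a⁻¹ * h⁻¹⁻¹ = h⁻¹ * (a * h * a⁻¹ * h⁻¹)⁻¹ * h⁻¹⁻¹ := by group
            rw [e]
            exact hMn.conj_mem _ (M.inv_mem hh) h⁻¹ } with hKAdef
      have hKAmem : ∀ h : G, h ∈ KA ↔ a * h * a⁻¹ * h⁻¹ ∈ M := fun h => Iff.rfl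
      have hKAc : IsClosed (KA : Set G) := by
        have : (KA : Set G) = (fun h => a * h * a⁻¹ * h⁻¹) ⁻¹' (M : Set G) := rfl
        rw [this]
        exact hMclosed.preimage
          (((continuous_const.mul continuous_id).mul continuous_const).mul continuous_inv)
      have hMKA : M ≤ KA := by
        intro m hm
        rw [hKAmem]
        exact M.mul_mem (hMn.conj_mem _ hm a) (M.inv_mem hm)
      have haKA : a ∈ KA := by
        rw [hKAmem]
        have e : a * a * a⁻¹ * a⁻¹ = 1 := by group
        rw [e]; exact M.one_mem
      have := hTop KA hKAc hMKA haKA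
      intro h
      exact (hKAmem h).mp (this ▸ Subgroup.mem_top h)
    set S2 : Subgroup G :=
      { carrier := {g | ∀ h : G, g * h * g⁻¹ * h⁻¹ ∈ M}
        one_mem' := by
          intro h
          have e : (1 : G) * h * 1⁻¹ * h⁻¹ = 1 := by group
          rw [e]; exact M.one_mem
        mul_mem' := by
          intro g k hg hk h
          show (g * k) * h * (g * k)⁻¹ * h⁻¹ ∈ M
          have e : (g * k) * h * (g * k)⁻¹ * h⁻¹ =
              (g * (k * h * k⁻¹ * h⁻¹) * g⁻¹) * (g * h * g⁻¹ * h⁻¹) := by group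
          rw [e]
          exact M.mul_mem (hMn.conj_mem _ (hk h) g) (hg h)
        inv_mem' := by
          intro g hg h
          show g⁻¹ * h * g⁻¹⁻¹ * h⁻¹ ∈ M
          have e : g⁻¹ * h * g⁻¹⁻¹ * h⁻¹ = g⁻¹ * (g * h * g⁻¹ * h⁻¹)⁻¹ * g⁻¹⁻¹ := by group
          rw [e]
          exact hMn.conj_mem _ (M.inv_mem (hg h)) g⁻¹ } with hS2def
    have hS2mem : ∀ g : G, g ∈ S2 ↔ ∀ h : G, g * h * g⁻¹ * h⁻¹ ∈ M := fun g => Iff.rfl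
    have hS2c : IsClosed (S2 : Set G) := by
      have : (S2 : Set G) = ⋂ h : G, (fun g => g * h * g⁻¹ * h⁻¹) ⁻¹' (M : Set G) := by
        ext g
        simp only [SetLike.mem_coe, hS2mem, Set.mem_iInter, Set.mem_preimage]
      rw [this]
      exact isClosed_iInter fun h => hMclosed.preimage
        (((continuous_id.mul continuous_const).mul continuous_inv).mul continuous_const)
    have hMS2 : M ≤ S2 := by
      intro m hm
      rw [hS2mem]
      intro h
      have e : m * h * m⁻¹ * h⁻¹ = m * (h * m⁻¹ * h⁻¹) := by group
      rw [e]
      exact M.mul_mem hm (hMn.conj_mem _ (M.inv_mem hm) h)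
    have haS2 : a ∈ S2 := (hS2mem a).mpr hKA
    have := hTop S2 hS2c hMS2 haS2
    intro g
    exact (hS2mem g).mp (this ▸ Subgroup.mem_top g)
  -- central step : commutators of D (n+1) with G land in D n
  have hstep : ∀ (n : ℕ) (x : G), x ∈ D (n + 1) → ∀ g : G, x * g * x⁻¹ * g⁻¹ ∈ D n := by
    intro n x hx
    obtain ⟨hxM, hxe⟩ := (hDmem (n + 1) x).mp hx
    have hy : x⁻¹ * a⁻¹ * x * a ∈ D n := by
      refine (hDmem n _).mpr ⟨?_, ?_⟩
      · have e : x⁻¹ * a⁻¹ * x * a = x⁻¹ * (a⁻¹ * x * (a⁻¹)⁻¹) := by group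
        rw [e]
        exact M.mul_mem (M.inv_mem hxM) (hMn.conj_mem _ hxM a⁻¹)
      · have e : x⁻¹ * a⁻¹ * x * a = engel x a 1 := by rw [engel_succ, engel_zero]
        rw [e, engel_comp, Nat.add_comm, hxe]
    set T : Subgroup G :=
      { carrier := {g | x * g * x⁻¹ * g⁻¹ ∈ D n}
        one_mem' := by
          show x * 1 * x⁻¹ * 1⁻¹ ∈ D n
          have e : x * 1 * x⁻¹ * 1⁻¹ = 1 := by group
          rw [e]; exact hDone n
        mul_mem' := by
          intro g h hg hh
          show x * (g * h) * x⁻¹ * (g * h)⁻¹ ∈ D n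
          have e : x * (g * h) * x⁻¹ * (g * h)⁻¹ =
              (x * g * x⁻¹ * g⁻¹) * (g * (x * h * x⁻¹ * h⁻¹) * g⁻¹) := by group
          rw [e]
          exact (D n).mul_mem hg (hDnormal n g _ hh)
        inv_mem' := by
          intro g hg
          show x * g⁻¹ * x⁻¹ * g⁻¹⁻¹ ∈ D n
          have e : x * g⁻¹ * x⁻¹ * g⁻¹⁻¹ = g⁻¹ * (x * g * x⁻¹ * g⁻¹)⁻¹ * g⁻¹⁻¹ := by group
          rw [e]
          exact hDnormal n g⁻¹ _ ((D n).inv_mem hg) } with hTdef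
    have hTmem : ∀ g : G, g ∈ T ↔ x * g * x⁻¹ * g⁻¹ ∈ D n := fun g => Iff.rfl
    have hTc : IsClosed (T : Set G) := by
      have : (T : Set G) = (fun g => x * g * x⁻¹ * g⁻¹) ⁻¹' (D n : Set G) := rfl
      rw [this]
      exact (hDclosed n).preimage
        (((continuous_const.mul continuous_id).mul continuous_const).mul continuous_inv)
    have hMT : M ≤ T := by
      intro m hm
      rw [hTmem]
      have e : x * m * x⁻¹ * m⁻¹ = 1 := by rw [hMab x hxM m hm]; group
      rw [e]; exact hDone n
    have haT : a ∈ T := by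
      rw [hTmem]
      have e : x * a * x⁻¹ * a⁻¹ = (x * a) * (x⁻¹ * a⁻¹ * x * a) * (x * a)⁻¹ := by group
      rw [e]
      exact hDnormal n (x * a) _ hy
    have := hTop T hTc hMT haT
    intro g
    exact (hTmem g).mp (this ▸ Subgroup.mem_top g)
  -- assemble the ascending central series
  rw [nilpotent_iff_finite_ascending_central_series]
  refine ⟨N + 1, fun j => if j ≤ N then D j else ⊤, ⟨?_, ?_⟩, ?_⟩
  · show (if 0 ≤ N then D 0 else ⊤) = ⊥
    rw [if_pos (Nat.zero_le N)]
    rw [eq_bot_iff]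
    intro x hx
    obtain ⟨_, hxe⟩ := (hDmem 0 x).mp hx
    rw [engel_zero] at hxe
    simpa [Subgroup.mem_bot] using hxe
  · intro x n hx g
    have hx' : x ∈ (if n + 1 ≤ N then D (n + 1) else ⊤) := hx
    show x * g * x⁻¹ * g⁻¹ ∈ (if n ≤ N then D n else ⊤)
    by_cases h1 : n + 1 ≤ N
    · rw [if_pos h1] at hx'
      rw [if_pos (Nat.le_of_succ_le h1)]
      exact hstep n x hx' g
    · by_cases h2 : n ≤ N
      · have hnN : n = N := le_antisymm h2 (Nat.lt_succ_iff.mp (Nat.lt_of_not_le h1))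
        rw [if_pos h2]
        subst hnN
        refine (hDmem n _).mpr ⟨hcommM x g, ?_⟩
        exact hN _ (hcommM x g)
      · rw [if_neg h2]
        exact Subgroup.mem_top _
  · show (if N + 1 ≤ N then D (N + 1) else ⊤) = ⊤
    rw [if_neg (by omega)]
end

section
/- Let G be a profinite group and K a procyclic pro-p closed subgroup of G such that K ∩ K^x ≠ 1 for every x ∈ G. Then K contains a nontrivial closed subgroup L, of finite index in K, which is normal in G. -/
lemma aux_pow_subgroup {Q : Type*} [Group Q] [Finite Q] [IsCyclic Q]
    (A B : Subgroup Q) (h : Nat.card A ∣ Nat.card B) : A ≤ B := by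
  classical
  obtain ⟨g, hg⟩ := IsCyclic.exists_generator (α := Q)
  set n := Nat.card B with hn
  have hn0 : 0 < n := Nat.card_pos
  -- the subgroup of n-th roots of 1
  have hcomm : ∀ x y : Q, Commute x y := by
    intro x y
    obtain ⟨i, hi⟩ := hg x
    obtain ⟨j, hj⟩ := hg y
    rw [← hi, ← hj]
    exact (Commute.refl g).zpow_zpow i j
  let T : Subgroup Q :=
    { carrier := {x | x ^ n = 1}
      one_mem' := one_pow n
      mul_mem' := by
        intro x y hx hy
        have := (hcomm x y).mul_pow n
        simp only [Set.mem_setOf_eq] at *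
        rw [this, hx, hy, one_mul]
      inv_mem' := by
        intro x hx
        simp only [Set.mem_setOf_eq] at *
        rw [inv_pow, hx, inv_one] }
  have hmemT : ∀ x : Q, x ∈ T ↔ x ^ n = 1 := fun x => Iff.rfl
  have hBT : B ≤ T := by
    intro b hb
    rw [hmemT]
    have : (⟨b, hb⟩ : B) ^ n = 1 := by rw [hn]; exact pow_card_eq_one'
    simpa using congrArg (Subtype.val) this
  have hTcard : Nat.card T ≤ n := by
    haveI : Fintype Q := Fintype.ofFinite Q
    have h1 : Nat.card T = (Finset.univ.filter (fun a : Q => a ^ n = 1)).card := by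
      have : Nat.card T = Nat.card {x : Q // x ^ n = 1} := rfl
      rw [this, Nat.card_eq_fintype_card, Fintype.card_subtype]
    rw [h1]
    exact IsCyclic.card_pow_eq_one_le hn0
  have hBeq : B = T := Subgroup.eq_of_le_of_card_ge hBT (le_trans hTcard (le_of_eq hn.symm))
  intro a ha
  rw [hBeq, hmemT]
  obtain ⟨c, hc⟩ := h
  have h1 : a ^ Nat.card A = 1 := by
    have h2 : (⟨a, ha⟩ : A) ^ Nat.card A = 1 := pow_card_eq_one'
    calc a ^ Nat.card A = ((⟨a, ha⟩ : A) ^ Nat.card A : A) := by rw [SubmonoidClass.coe_pow]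
    _ = ((1 : A) : Q) := by rw [h2]
    _ = 1 := rfl
  rw [hc, pow_mul, h1, one_pow]

lemma aux_chain_cyclic {p : ℕ} (hp : p.Prime) {Q : Type*} [Group Q] [Finite Q] [IsCyclic Q]
    (hQ : IsPGroup p Q) (A B : Subgroup Q) : A ≤ B ∨ B ≤ A := by
  haveI : Fact p.Prime := ⟨hp⟩
  obtain ⟨a, ha⟩ := (hQ.to_subgroup A).exists_card_eq
  obtain ⟨b, hb⟩ := (hQ.to_subgroup B).exists_card_eq
  rcases le_total a b with h | h
  · exact Or.inl (aux_pow_subgroup A B (by rw [ha, hb]; exact pow_dvd_pow p h))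
  · exact Or.inr (aux_pow_subgroup B A (by rw [ha, hb]; exact pow_dvd_pow p h))

set_option linter.unusedSectionVars false

section Abstract

variable {p : ℕ} {H : Type*} [Group H] [TopologicalSpace H] [IsTopologicalGroup H]
  [CompactSpace H] [T2Space H] [TotallyDisconnectedSpace H]

/-- separation by an open normal subgroup -/
lemma aux_sep {A B : Subgroup H} (hA : IsClosed (A : Set H)) (hB : IsClosed (B : Set H))
    {a b : H} (ha : a ∉ B) (hb : b ∉ A) :
    ∃ N : Subgroup H, N.Normal ∧ IsOpen (N : Set H) ∧
      (∀ n ∈ N, b * n ∉ A) ∧ (∀ n ∈ N, a * n ∉ B) := by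
  have hO : IsOpen ((fun y => b * y) ⁻¹' (A : Set H)ᶜ ∩ (fun y => a * y) ⁻¹' (B : Set H)ᶜ) :=
    ((hA.isOpen_compl.preimage (continuous_const.mul continuous_id)).inter
      (hB.isOpen_compl.preimage (continuous_const.mul continuous_id)))
  have h1 : (1 : H) ∈ (fun y => b * y) ⁻¹' (A : Set H)ᶜ ∩ (fun y => a * y) ⁻¹' (B : Set H)ᶜ := by
    constructor <;> simp [ha, hb]
  obtain ⟨W, hW, h1W, hWsub⟩ := compact_exists_isClopen_in_isOpen hO h1
  obtain ⟨N, hN⟩ := IsTopologicalGroup.exist_openNormalSubgroup_sub_clopen_nhds_of_one hW h1W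
  refine ⟨N.toSubgroup, N.isNormal', N.isOpen, ?_, ?_⟩
  · intro n hn hmem
    exact (hWsub (hN hn)).1 hmem
  · intro n hn hmem
    exact (hWsub (hN hn)).2 hmem

variable (g : H)
  (hdense : closure ((Subgroup.closure ({g} : Set H) : Subgroup H) : Set H) = Set.univ)
  (hproP : ∀ N : Subgroup H, ∀ _ : N.Normal, IsOpen (N : Set H) → IsPGroup p (H ⧸ N))

include hdense in
lemma aux_cyclic_quot (N : Subgroup H) (hNn : N.Normal) (hNo : IsOpen (N : Set H)) :
    IsCyclic (H ⧸ N) := by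
  haveI := hNn
  let π := QuotientGroup.mk' N
  have hsurj : Function.Surjective π := QuotientGroup.mk'_surjective N
  set Z : Subgroup (H ⧸ N) := Subgroup.zpowers (π g) with hZ
  have hNle : N ≤ Z.comap π := by
    intro x hx
    have : π x = 1 := (QuotientGroup.eq_one_iff x).mpr hx
    simp only [Subgroup.mem_comap, this]
    exact Z.one_mem
  have hopen : IsOpen ((Z.comap π : Subgroup H) : Set H) := Subgroup.isOpen_mono hNle hNo
  have hclosed : IsClosed ((Z.comap π : Subgroup H) : Set H) := Subgroup.isClosed_of_isOpen _ hopen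
  have hgen : (Subgroup.closure {g} : Subgroup H) ≤ Z.comap π := by
    rw [Subgroup.closure_le]
    intro x hx
    rcases hx with rfl
    exact Subgroup.mem_comap.mpr (Subgroup.mem_zpowers _)
  have htop : (Z.comap π : Subgroup H) = ⊤ := by
    have : ((Z.comap π : Subgroup H) : Set H) = Set.univ := by
      apply Set.eq_univ_of_univ_subset
      rw [← hdense]
      exact hclosed.closure_subset_iff.mpr hgen
    exact SetLike.ext' this
  have hZtop : Z = ⊤ := by
    have := congrArg (Subgroup.map π) htop
    rwa [Subgroup.map_comap_eq_self_of_surjective hsurj,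
      Subgroup.map_top_of_surjective _ hsurj] at this
  exact ⟨⟨π g, fun x => by have : x ∈ Z := hZtop ▸ Subgroup.mem_top x; exact this⟩⟩

include hproP in
lemma aux_pow_mem (hp : p.Prime) (N : Subgroup H) (hNn : N.Normal) (hNo : IsOpen (N : Set H)) :
    ∃ e : ℕ, g ^ (p ^ e) ∈ N := by
  haveI := hNn
  haveI : Fact p.Prime := ⟨hp⟩
  haveI : Finite (H ⧸ N) := N.quotient_finite_of_isOpen hNo
  obtain ⟨e, he⟩ := (hproP N hNn hNo).exists_card_eq
  refine ⟨e, ?_⟩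
  have h1 : ((g : H) : H ⧸ N) ^ (p ^ e) = 1 := by
    rw [← he]
    exact pow_card_eq_one'
  rw [← QuotientGroup.mk_pow] at h1
  exact (QuotientGroup.eq_one_iff _).mp h1

include hdense hproP in
lemma aux_chain (hp : p.Prime) (A B : Subgroup H) (hA : IsClosed (A : Set H))
    (hB : IsClosed (B : Set H)) : A ≤ B ∨ B ≤ A := by
  by_contra hcon
  push_neg at hcon
  obtain ⟨a, haA, haB⟩ := SetLike.not_le_iff_exists.mp hcon.1
  obtain ⟨b, hbB, hbA⟩ := SetLike.not_le_iff_exists.mp hcon.2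
  obtain ⟨N, hNn, hNo, hbN, haN⟩ := aux_sep hA hB haB hbA
  haveI := hNn
  haveI : Finite (H ⧸ N) := N.quotient_finite_of_isOpen hNo
  haveI := aux_cyclic_quot g hdense N hNn hNo
  let π := QuotientGroup.mk' N
  rcases aux_chain_cyclic hp (hproP N hNn hNo) (A.map π) (B.map π) with h | h
  · have hmem : π a ∈ B.map π := h ⟨a, haA, rfl⟩
    obtain ⟨b', hb', hπ⟩ := hmem
    have hmem2 : b'⁻¹ * a ∈ N := by
      rw [← QuotientGroup.eq]
      exact hπ
    exact haN _ (N.inv_mem hmem2) (by simpa [mul_assoc] using hb')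
  · have hmem : π b ∈ A.map π := h ⟨b, hbB, rfl⟩
    obtain ⟨a', ha', hπ⟩ := hmem
    have hmem2 : a'⁻¹ * b ∈ N := by
      rw [← QuotientGroup.eq]
      exact hπ
    exact hbN _ (N.inv_mem hmem2) (by simpa [mul_assoc] using ha')

include hdense hproP in
lemma aux_inter_bot (hp : p.Prime) (x : H)
    (hx : ∀ n : ℕ, x ∈ (Subgroup.closure ({g ^ p ^ n} : Set H)).topologicalClosure) : x = 1 := by
  by_contra hne
  have hxbot : x ∉ (⊥ : Subgroup H) := by simpa using hne
  obtain ⟨N, hNn, hNo, -, hxN⟩ := aux_sep (B := (⊥ : Subgroup H)) (A := (⊥ : Subgroup H))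
    (by rw [Subgroup.coe_bot]; exact isClosed_singleton)
    (by rw [Subgroup.coe_bot]; exact isClosed_singleton) hxbot hxbot
  obtain ⟨e, he⟩ := aux_pow_mem g hproP hp N hNn hNo
  have hle : (Subgroup.closure ({g ^ p ^ e} : Set H)).topologicalClosure ≤ N := by
    apply Subgroup.topologicalClosure_minimal
    · rw [Subgroup.closure_le]
      intro y hy
      rcases hy with rfl
      exact he
    · exact Subgroup.isClosed_of_isOpen _ hNo
  have hxmem : x ∈ N := hle (hx e)
  exact hxN x⁻¹ (N.inv_mem hxmem) (by simp)

end Abstract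

open scoped Pointwise

/-- A topological group is pro-`p` if the quotient by every open normal subgroup is a
finite `p`-group (in the context of profinite groups). -/
def IsProP (p : ℕ) (G : Type*) [Group G] [TopologicalSpace G] : Prop :=
  ∀ N : Subgroup G, ∀ _ : N.Normal, IsOpen (N : Set G) → IsPGroup p (G ⧸ N)

/-- A subgroup of a topological group is procyclic if it is the topological closure of
a subgroup generated by a single element. -/
def IsProcyclic {G : Type*} [Group G] [TopologicalSpace G] [IsTopologicalGroup G] (H : Subgroup G) : Prop :=
  ∃ k : G, (Subgroup.closure {k}).topologicalClosure = H

/-- Let `G` be a profinite group and `K` a procyclic pro-`p` closed subgroup such that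
`K ∩ K^x ≠ 1` for every `x ∈ G`. Then `K` contains a nontrivial closed subgroup of
finite index in `K` which is normal in `G`. -/
theorem procyclic_proP_subgroup_contains_normal
    (p : ℕ) (hp : p.Prime) (G : Type*) [Group G] [TopologicalSpace G]
    [IsTopologicalGroup G] [CompactSpace G] [T2Space G] [TotallyDisconnectedSpace G]
    (K : Subgroup G) (hKclosed : IsClosed (K : Set G))
    (hKproc : IsProcyclic K) (hKproP : IsProP p K)
    (hint : ∀ x : G, K ⊓ K.map (MulAut.conj x).toMonoidHom ≠ ⊥) :
    ∃ L : Subgroup G, L ≤ K ∧ L ≠ ⊥ ∧ IsClosed (L : Set G) ∧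
      L.relIndex K ≠ 0 ∧ L.Normal := by
  classical
  obtain ⟨k, hk⟩ := hKproc
  have hkK : k ∈ K := by
    rw [← hk]
    exact Subgroup.le_topologicalClosure _ (Subgroup.subset_closure rfl)
  haveI : CompactSpace ↥K := isCompact_iff_compactSpace.mp hKclosed.isCompact
  set g : ↥K := ⟨k, hkK⟩ with hg
  -- transfer of images of closures of singletons
  have himg : ∀ x : ↥K, Subtype.val '' ((Subgroup.closure ({x} : Set ↥K) : Subgroup ↥K) : Set ↥K)
      = ((Subgroup.closure ({(x : G)} : Set G) : Subgroup G) : Set G) := by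
    intro x
    have h1 : Subgroup.map K.subtype (Subgroup.closure {x}) = Subgroup.closure {(x : G)} := by
      rw [MonoidHom.map_closure]
      congr 1
      simp
    have h2 := congrArg (fun (A : Subgroup G) => (A : Set G)) h1
    simpa [Subgroup.coe_map] using h2
  have hcoe_pow : ∀ n : ℕ, ((g ^ p ^ n : ↥K) : G) = k ^ p ^ n := fun n => rfl
  -- density of the cyclic subgroup generated by g in K
  have hdense : closure ((Subgroup.closure ({g} : Set ↥K) : Subgroup ↥K) : Set ↥K) = Set.univ := by
    rw [Topology.IsEmbedding.subtypeVal.closure_eq_preimage_closure_image, himg g]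
    have : closure ((Subgroup.closure ({k} : Set G) : Subgroup G) : Set G) = (K : Set G) := by
      rw [← hk]; rfl
    rw [this]
    ext y
    simp [y.2]
  -- the K_n in G
  set KnG : ℕ → Subgroup G := fun n => (Subgroup.closure ({k ^ p ^ n} : Set G)).topologicalClosure
    with hKnG
  have hKnmem : ∀ n, k ^ p ^ n ∈ KnG n := fun n =>
    Subgroup.le_topologicalClosure _ (Subgroup.subset_closure rfl)
  have hKnc : ∀ n, IsClosed ((KnG n : Subgroup G) : Set G) := fun n =>
    Subgroup.isClosed_topologicalClosure _
  have hKnK : ∀ n, KnG n ≤ K := by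
    intro n
    apply Subgroup.topologicalClosure_minimal _ _ hKclosed
    rw [Subgroup.closure_le]
    intro y hy
    rcases hy with rfl
    exact K.pow_mem hkK _
  have hKnAnti : ∀ m n : ℕ, m ≤ n → KnG n ≤ KnG m := by
    intro m n hmn
    apply Subgroup.topologicalClosure_minimal _ _ (hKnc m)
    rw [Subgroup.closure_le]
    intro y hy
    rcases hy with rfl
    have : k ^ p ^ n = (k ^ p ^ m) ^ p ^ (n - m) := by
      rw [← pow_mul, ← pow_add, Nat.add_sub_cancel' hmn]
    rw [this]
    exact (KnG m).pow_mem (hKnmem m) _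
  -- membership transfer
  have hmemKn : ∀ n (y : ↥K),
      y ∈ (Subgroup.closure ({g ^ p ^ n} : Set ↥K)).topologicalClosure ↔ (y : G) ∈ KnG n := by
    intro n y
    constructor
    · intro hy
      have hy' : y ∈ closure ((Subgroup.closure ({g ^ p ^ n} : Set ↥K) : Subgroup ↥K) : Set ↥K) := hy
      rw [Topology.IsEmbedding.subtypeVal.closure_eq_preimage_closure_image, himg (g ^ p ^ n),
        hcoe_pow n] at hy'
      exact hy'
    · intro hy
      show y ∈ closure ((Subgroup.closure ({g ^ p ^ n} : Set ↥K) : Subgroup ↥K) : Set ↥K)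
      rw [Topology.IsEmbedding.subtypeVal.closure_eq_preimage_closure_image, himg (g ^ p ^ n),
        hcoe_pow n]
      exact hy
  -- chain property in G
  have chainG : ∀ A B : Subgroup G, A ≤ K → B ≤ K → IsClosed (A : Set G) → IsClosed (B : Set G) →
      A ≤ B ∨ B ≤ A := by
    intro A B hAK hBK hAc hBc
    have hsetof : ∀ (C : Subgroup G), ((C.subgroupOf K : Subgroup ↥K) : Set ↥K)
        = Subtype.val ⁻¹' (C : Set G) := by
      intro C
      ext y
      simp [Subgroup.mem_subgroupOf]
    have hA' : IsClosed ((A.subgroupOf K : Subgroup ↥K) : Set ↥K) := by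
      rw [hsetof]; exact hAc.preimage continuous_subtype_val
    have hB' : IsClosed ((B.subgroupOf K : Subgroup ↥K) : Set ↥K) := by
      rw [hsetof]; exact hBc.preimage continuous_subtype_val
    rcases aux_chain g hdense hKproP hp _ _ hA' hB' with h | h
    · left
      intro x hx
      exact h (show (⟨x, hAK hx⟩ : ↥K) ∈ A.subgroupOf K from hx)
    · right
      intro x hx
      exact h (show (⟨x, hBK hx⟩ : ↥K) ∈ B.subgroupOf K from hx)
  -- trivial intersection in G
  have hinterG : ∀ y : G, (∀ n, y ∈ KnG n) → y = 1 := by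
    intro y hy
    have hyK : y ∈ K := hKnK 0 (hy 0)
    have h1 : ∀ n, (⟨y, hyK⟩ : ↥K) ∈ (Subgroup.closure ({g ^ p ^ n} : Set ↥K)).topologicalClosure :=
      fun n => (hmemKn n ⟨y, hyK⟩).mpr (hy n)
    have h2 := aux_inter_bot g hdense hKproP hp ⟨y, hyK⟩ h1
    exact congrArg Subtype.val h2
  -- nontrivial closed subgroups of K contain some KnG n
  have hcontain : ∀ A : Subgroup G, A ≤ K → IsClosed (A : Set G) → A ≠ ⊥ → ∃ n, KnG n ≤ A := by
    intro A hAK hAc hAbot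
    by_contra hcon
    push_neg at hcon
    have h1 : ∀ n, A ≤ KnG n := fun n =>
      (chainG (KnG n) A (hKnK n) hAK (hKnc n) hAc).resolve_left (hcon n)
    apply hAbot
    rw [eq_bot_iff]
    intro x hx
    have := hinterG x (fun n => h1 n hx)
    simpa [this] using Subgroup.one_mem _
  -- relindex of KnG n in K is finite
  have hrel : ∀ n, (KnG n).relIndex K ≠ 0 := by
    intro n
    have hcov : (K : Set G) ⊆ ⋃ j : Fin (p ^ n), (k ^ (j : ℕ)) • ((KnG n : Subgroup G) : Set G) := by
      have hclosed : IsClosed (⋃ j : Fin (p ^ n), (k ^ (j : ℕ)) • ((KnG n : Subgroup G) : Set G)) :=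
        isClosed_iUnion_of_finite fun j => (hKnc n).smul _
      have hpn : (0 : ℤ) < (p ^ n : ℕ) := by exact_mod_cast pow_pos hp.pos n
      have hsub : ((Subgroup.closure ({k} : Set G) : Subgroup G) : Set G)
          ⊆ ⋃ j : Fin (p ^ n), (k ^ (j : ℕ)) • ((KnG n : Subgroup G) : Set G) := by
        intro x hx
        rw [SetLike.mem_coe, ← Subgroup.zpowers_eq_closure, Subgroup.mem_zpowers_iff] at hx
        obtain ⟨m, rfl⟩ := hx
        have hr0 : 0 ≤ m % (p ^ n : ℕ) := Int.emod_nonneg m (by positivity)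
        have hrlt : m % (p ^ n : ℕ) < (p ^ n : ℕ) := Int.emod_lt_of_pos m hpn
        refine Set.mem_iUnion.mpr ⟨⟨(m % (p ^ n : ℕ)).toNat, ?_⟩, ?_⟩
        · omega
        rw [Set.mem_smul_set_iff_inv_smul_mem]
        have key : (k ^ ((m % (p ^ n : ℕ)).toNat : ℕ))⁻¹ • k ^ m
            = (k ^ (p ^ n : ℕ)) ^ (m / (p ^ n : ℕ)) := by
          rw [smul_eq_mul]
          have h1 : (k ^ ((m % (p ^ n : ℕ)).toNat : ℕ)) = k ^ (m % (p ^ n : ℕ)) := by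
            rw [← zpow_natCast]
            congr 1
            omega
          have h2 : (k ^ (p ^ n : ℕ)) ^ (m / (p ^ n : ℕ)) = k ^ ((p ^ n : ℕ) * (m / (p ^ n : ℕ))) := by
            rw [← zpow_natCast k (p ^ n), ← zpow_mul]
          rw [h1, h2, ← zpow_neg, ← zpow_add]
          congr 1
          have := Int.mul_ediv_add_emod m ((p ^ n : ℕ) : ℤ)
          omega
        rw [key]
        exact SetLike.mem_coe.mpr ((KnG n).zpow_mem (hKnmem n) _)
      have h3 : (K : Set G) = closure ((Subgroup.closure ({k} : Set G) : Subgroup G) : Set G) := by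
        rw [← hk]; rfl
      rw [h3]
      exact hclosed.closure_subset_iff.mpr hsub
    haveI : Finite (↥K ⧸ (KnG n).subgroupOf K) := by
      apply Finite.of_surjective (f := fun j : Fin (p ^ n) =>
        (QuotientGroup.mk (⟨k ^ (j : ℕ), K.pow_mem hkK _⟩ : ↥K) : ↥K ⧸ (KnG n).subgroupOf K))
      intro q
      obtain ⟨y, rfl⟩ := QuotientGroup.mk_surjective q
      obtain ⟨j, hj⟩ := Set.mem_iUnion.mp (hcov y.2)
      refine ⟨j, ?_⟩
      rw [QuotientGroup.eq]
      have hj' : (k ^ (j : ℕ))⁻¹ * (y : G) ∈ KnG n := by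
        have := Set.mem_smul_set_iff_inv_smul_mem.mp hj
        rwa [smul_eq_mul] at this
      show ((⟨k ^ (j : ℕ), K.pow_mem hkK _⟩ : ↥K)⁻¹ * y : ↥K) ∈ (KnG n).subgroupOf K
      rw [Subgroup.mem_subgroupOf]
      exact hj'
    exact Subgroup.index_ne_zero_of_finite
  -- the normal core is closed
  have hcoreClosed : IsClosed ((K.normalCore : Subgroup G) : Set G) := by
    have h1 : ((K.normalCore : Subgroup G) : Set G)
        = ⋂ b : G, (fun a => b * a * b⁻¹) ⁻¹' (K : Set G) := by
      ext a
      simp only [Set.mem_iInter, Set.mem_preimage, SetLike.mem_coe]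
      exact Iff.rfl
    rw [h1]
    exact isClosed_iInter fun b =>
      hKclosed.preimage ((continuous_const.mul continuous_id).mul continuous_const)
  -- shared conclusion
  have conclude : ∀ J : Subgroup G, J ≤ K.normalCore → J ≠ ⊥ → J.relIndex K ≠ 0 →
      ∃ L : Subgroup G, L ≤ K ∧ L ≠ ⊥ ∧ IsClosed (L : Set G) ∧ L.relIndex K ≠ 0 ∧ L.Normal := by
    intro J hJ hJb hJr
    refine ⟨K.normalCore, K.normalCore_le, ?_, hcoreClosed, ?_, K.normalCore_normal⟩
    · intro h
      exact hJb (le_bot_iff.mp (h ▸ hJ))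
    · intro h0
      apply hJr
      have hdvd := Subgroup.relIndex_dvd_of_le_left K hJ
      rw [h0] at hdvd
      exact zero_dvd_iff.mp hdvd
  by_cases hfin : ∃ n, k ^ p ^ n = 1
  · -- K is finite
    obtain ⟨n₀, hn₀⟩ := hfin
    have hford : IsOfFinOrder k := isOfFinOrder_iff_pow_eq_one.mpr ⟨p ^ n₀, pow_pos hp.pos n₀, hn₀⟩
    have hKz : K = Subgroup.zpowers k := by
      rw [← hk, ← Subgroup.zpowers_eq_closure]
      refine le_antisymm ?_ (Subgroup.le_topologicalClosure _)
      apply Subgroup.topologicalClosure_minimal _ le_rfl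
      exact hford.finite_zpowers.isClosed
    have hfinK : (K : Set G).Finite := by
      rw [hKz]
      exact hford.finite_zpowers
    haveI hKfin : Finite ↥K := hfinK.to_subtype
    set D : G → Subgroup G := fun x => K ⊓ K.map (MulAut.conj x).toMonoidHom with hD
    have hDK : ∀ x, D x ≤ K := fun x => inf_le_left
    have hDfin : ∀ x, Finite ↥(D x) := fun x =>
      (hfinK.subset (fun y hy => hDK x hy)).to_subtype
    have hDclosed : ∀ x, IsClosed ((D x : Subgroup G) : Set G) := by
      intro x
      have h1 : ((K.map (MulAut.conj x).toMonoidHom : Subgroup G) : Set G)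
          = (fun y => x * y * x⁻¹) '' (K : Set G) := by
        rw [Subgroup.coe_map]
        rfl
      have h2 : IsClosed ((K.map (MulAut.conj x).toMonoidHom : Subgroup G) : Set G) := by
        rw [h1]
        exact (hKclosed.isCompact.image
          ((continuous_const.mul continuous_id).mul continuous_const)).isClosed
      rw [Subgroup.coe_inf]
      exact hKclosed.inter h2
    have hmem0 : Nat.card ↥(D 1) ∈ Set.range fun x => Nat.card ↥(D x) := ⟨1, rfl⟩
    obtain ⟨x₀, hx₀⟩ := Nat.sInf_mem (Set.range_nonempty fun x => Nat.card ↥(D x))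
    have hmin : ∀ x, D x₀ ≤ D x := by
      intro x
      rcases chainG (D x₀) (D x) (hDK x₀) (hDK x) (hDclosed x₀) (hDclosed x) with h | h
      · exact h
      · haveI := hDfin x₀
        have h2 : sInf (Set.range fun x => Nat.card ↥(D x)) ≤ Nat.card ↥(D x) :=
          Nat.sInf_le ⟨x, rfl⟩
        have h3 : Nat.card ↥(D x₀) ≤ Nat.card ↥(D x) := le_trans (le_of_eq hx₀) h2
        have h4 : D x = D x₀ := Subgroup.eq_of_le_of_card_ge h h3
        rw [← h4]
    have hsub : D x₀ ≤ K.normalCore := by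
      intro a ha
      show ∀ b : G, b * a * b⁻¹ ∈ K
      intro b
      have h1 : a ∈ K.map (MulAut.conj b⁻¹).toMonoidHom := (hmin b⁻¹ ha).2
      obtain ⟨c, hc, hce⟩ := h1
      have h2 : b * a * b⁻¹ = c := by
        rw [← hce]
        show b * (b⁻¹ * c * b⁻¹⁻¹) * b⁻¹ = c
        group
      rw [h2]
      exact hc
    have hDrel : (D x₀).relIndex K ≠ 0 := by
      haveI : Finite (↥K ⧸ (D x₀).subgroupOf K) := Quotient.finite _
      exact Subgroup.index_ne_zero_of_finite
    exact conclude (D x₀) hsub (hint x₀) hDrel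
  · -- K is infinite : the Baire category argument
    push_neg at hfin
    have hKnbot : ∀ n, KnG n ≠ ⊥ := by
      intro n h
      exact hfin n (by simpa [h] using hKnmem n)
    set C : ℕ → Set G := fun n => {x : G | ∀ a ∈ KnG n, x⁻¹ * a * x ∈ K} with hC
    have hCclosed : ∀ n, IsClosed (C n) := by
      intro n
      have h1 : C n = ⋂ (a : G) (_ : a ∈ KnG n), (fun x => x⁻¹ * a * x) ⁻¹' (K : Set G) := by
        ext x
        simp [hC]
      rw [h1]
      exact isClosed_iInter fun a => isClosed_iInter fun _ =>
        hKclosed.preimage ((continuous_inv.mul continuous_const).mul continuous_id)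
    have hCmono : ∀ m n : ℕ, m ≤ n → C m ⊆ C n := by
      intro m n hmn x hx a ha
      exact hx a (hKnAnti m n hmn ha)
    have hCcover : ∀ x : G, ∃ n, x ∈ C n := by
      intro x
      have h1 : K ⊓ K.map (MulAut.conj x).toMonoidHom ≤ K := inf_le_left
      have h2 : IsClosed ((K ⊓ K.map (MulAut.conj x).toMonoidHom : Subgroup G) : Set G) := by
        have h3 : ((K.map (MulAut.conj x).toMonoidHom : Subgroup G) : Set G)
            = (fun y => x * y * x⁻¹) '' (K : Set G) := by
          rw [Subgroup.coe_map]; rfl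
        rw [Subgroup.coe_inf, h3]
        exact hKclosed.inter (hKclosed.isCompact.image
          ((continuous_const.mul continuous_id).mul continuous_const)).isClosed
      obtain ⟨n, hn⟩ := hcontain _ h1 h2 (hint x)
      refine ⟨n, ?_⟩
      intro a ha
      have h4 : a ∈ K.map (MulAut.conj x).toMonoidHom := (hn ha).2
      obtain ⟨c, hc, hce⟩ := h4
      have h5 : x⁻¹ * a * x = c := by
        rw [← hce]
        show x⁻¹ * (x * c * x⁻¹) * x = c
        group
      rw [h5]
      exact hc
    have hcoverU : (⋃ n, C n) = Set.univ :=
      Set.eq_univ_of_forall fun x => Set.mem_iUnion.mpr (hCcover x)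
    haveI : Nonempty G := ⟨1⟩
    obtain ⟨M, x₁, hx₁⟩ := nonempty_interior_of_iUnion_of_closed hCclosed hcoverU
    have hx₁C : x₁ ∈ C M := interior_subset hx₁
    -- B₀ = x₁⁻¹ (KnG M) x₁ is a nontrivial closed subgroup of K
    set B₀ : Subgroup G := (KnG M).map (MulAut.conj x₁⁻¹).toMonoidHom with hB₀
    have hB₀mem : ∀ a ∈ KnG M, x₁⁻¹ * a * x₁ ∈ B₀ := by
      intro a ha
      refine ⟨a, ha, ?_⟩
      show x₁⁻¹ * a * x₁⁻¹⁻¹ = x₁⁻¹ * a * x₁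
      rw [inv_inv]
    have hB₀K : B₀ ≤ K := by
      intro b hb
      obtain ⟨a, ha, hae⟩ := hb
      have h1 : b = x₁⁻¹ * a * x₁ := by
        rw [← hae]
        show x₁⁻¹ * a * x₁⁻¹⁻¹ = x₁⁻¹ * a * x₁
        rw [inv_inv]
      rw [h1]
      exact hx₁C a ha
    have hB₀closed : IsClosed ((B₀ : Subgroup G) : Set G) := by
      have h1 : ((B₀ : Subgroup G) : Set G) = (fun y => x₁⁻¹ * y * x₁⁻¹⁻¹) '' ((KnG M : Subgroup G) : Set G) := by
        rw [hB₀, Subgroup.coe_map]; rfl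
      rw [h1]
      exact ((hKnc M).isCompact.image
        ((continuous_const.mul continuous_id).mul continuous_const)).isClosed
    have hB₀bot : B₀ ≠ ⊥ := by
      intro h
      have h1 : x₁⁻¹ * k ^ p ^ M * x₁ ∈ B₀ := hB₀mem _ (hKnmem M)
      rw [h, Subgroup.mem_bot] at h1
      apply hfin M
      have h2 : k ^ p ^ M = x₁ * (x₁⁻¹ * k ^ p ^ M * x₁) * x₁⁻¹ := by group
      rw [h2, h1]
      group
    obtain ⟨a₀, ha₀⟩ := hcontain B₀ hB₀K hB₀closed hB₀bot
    -- property of the neighborhood of 1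
    have hW : ∀ v ∈ interior (C M), ∀ b ∈ KnG a₀, (x₁⁻¹ * v)⁻¹ * b * (x₁⁻¹ * v) ∈ K := by
      intro v hv b hb
      obtain ⟨a, ha, hae⟩ := ha₀ hb
      have h1 : b = x₁⁻¹ * a * x₁ := by
        rw [← hae]
        show x₁⁻¹ * a * x₁⁻¹⁻¹ = x₁⁻¹ * a * x₁
        rw [inv_inv]
      have h2 : (x₁⁻¹ * v)⁻¹ * b * (x₁⁻¹ * v) = v⁻¹ * a * v := by
        rw [h1]; group
      rw [h2]
      exact interior_subset hv a ha
    -- each point of G has a neighborhood inside some C n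
    have step : ∀ z : G, ∃ n, ∀ v ∈ interior (C M), z * (x₁⁻¹ * v) ∈ C n := by
      intro z
      obtain ⟨m, hzm⟩ := hCcover z
      have hstep : ∃ n, m ≤ n ∧ (KnG n).map (MulAut.conj z⁻¹).toMonoidHom ≤ KnG a₀ := by
        by_contra hcon
        push_neg at hcon
        have hEK : ∀ n, m ≤ n → (KnG n).map (MulAut.conj z⁻¹).toMonoidHom ≤ K := by
          intro n hmn b hb
          obtain ⟨a, ha, hae⟩ := hb
          have h1 : b = z⁻¹ * a * z := by
            rw [← hae]
            show z⁻¹ * a * z⁻¹⁻¹ = z⁻¹ * a * z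
            rw [inv_inv]
          rw [h1]
          exact hzm a (hKnAnti m n hmn ha)
        have hEc : ∀ n : ℕ, IsClosed (((KnG n).map (MulAut.conj z⁻¹).toMonoidHom : Subgroup G) : Set G) := by
          intro n
          have h1 : (((KnG n).map (MulAut.conj z⁻¹).toMonoidHom : Subgroup G) : Set G)
              = (fun y => z⁻¹ * y * z⁻¹⁻¹) '' ((KnG n : Subgroup G) : Set G) := by
            rw [Subgroup.coe_map]; rfl
          rw [h1]
          exact ((hKnc n).isCompact.image
            ((continuous_const.mul continuous_id).mul continuous_const)).isClosed
        have hge : ∀ n, m ≤ n → KnG a₀ ≤ (KnG n).map (MulAut.conj z⁻¹).toMonoidHom := by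
          intro n hmn
          exact (chainG _ _ (fun b hb => hEK n hmn hb) (hKnK a₀) (hEc n) (hKnc a₀)).resolve_left
            (hcon n hmn)
        have hbot : KnG a₀ ≤ ⊥ := by
          intro y hy
          have h1 : ∀ n : ℕ, z * y * z⁻¹ ∈ KnG n := by
            intro n
            have h2 := hge (max n m) (le_max_right n m) hy
            obtain ⟨a, ha, hae⟩ := h2
            have h3 : a = z * y * z⁻¹ := by
              have h4 : y = z⁻¹ * a * z := by
                rw [← hae]
                show z⁻¹ * a * z⁻¹⁻¹ = z⁻¹ * a * z
                rw [inv_inv]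
              rw [h4]; group
            rw [← h3]
            exact hKnAnti n (max n m) (le_max_left n m) ha
          have h5 := hinterG _ h1
          have h6 : y = z⁻¹ * (z * y * z⁻¹) * z := by group
          rw [Subgroup.mem_bot, h6, h5]
          group
        exact hKnbot a₀ (le_bot_iff.mp hbot)
      obtain ⟨n, hmn, hEsub⟩ := hstep
      refine ⟨n, ?_⟩
      intro v hv
      intro a ha
      have h1 : z⁻¹ * a * z ∈ KnG a₀ := by
        apply hEsub
        refine ⟨a, ha, ?_⟩
        show z⁻¹ * a * z⁻¹⁻¹ = z⁻¹ * a * z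
        rw [inv_inv]
      have h2 := hW v hv _ h1
      have h3 : (z * (x₁⁻¹ * v))⁻¹ * a * (z * (x₁⁻¹ * v))
          = (x₁⁻¹ * v)⁻¹ * (z⁻¹ * a * z) * (x₁⁻¹ * v) := by group
      rw [h3]
      exact h2
    -- finite subcover
    have hcov2 : (Set.univ : Set G) ⊆ ⋃ z : G, z • (x₁⁻¹ • interior (C M)) := by
      intro z _
      refine Set.mem_iUnion.mpr ⟨z, ?_⟩
      refine ⟨x₁⁻¹ • x₁, ⟨x₁, hx₁, rfl⟩, ?_⟩
      simp [smul_eq_mul]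
    obtain ⟨t, ht⟩ := isCompact_univ.elim_finite_subcover
      (fun z : G => z • (x₁⁻¹ • interior (C M)))
      (fun z => (isOpen_interior.smul x₁⁻¹).smul z) hcov2
    choose nfun hnfun using step
    set N : ℕ := t.sup nfun with hN
    have hCN : ∀ x : G, x ∈ C N := by
      intro x
      have h1 := ht (Set.mem_univ x)
      rw [Set.mem_iUnion₂] at h1
      obtain ⟨z, hzt, hmem⟩ := h1
      obtain ⟨w, hw, rfl⟩ := hmem
      obtain ⟨v, hv, rfl⟩ := hw
      have h2 := hnfun z v hv
      show z * (x₁⁻¹ * v) ∈ C N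
      exact hCmono _ _ (Finset.le_sup hzt) h2
    have hfinal : KnG N ≤ K.normalCore := by
      intro a ha
      show ∀ b : G, b * a * b⁻¹ ∈ K
      intro b
      have h1 := hCN b⁻¹ a ha
      rwa [inv_inv] at h1
    exact conclude (KnG N) hfinal (hKnbot N) (hrel N)
end

section
/- Let G be a finite group, and suppose G has a tower P₁, P₂, P₃ of height 3 (each Pᵢ of prime-power order, Pⱼ normalized by Pᵢ for i ≤ j, and P_{i+1} = γ_∞(P_{i+1}Pᵢ)). If γ_∞(N) is cyclic for every metanilpotent subgroup N of P₃P₂P₁ of the form P_{i+1}Pᵢ, and the automorphism group of a cyclic group is abelian, then a contradiction arises: no such tower exists when P₃ = γ_∞(P₃P₂) is cyclic and P₂ = γ_∞(P₂P₁). Concretely: if P₃ is cyclic, P₂P₁ normalizes P₃, P₂ = γ_∞(P₂P₁), and P₃ = γ_∞(P₃P₂), then P₃ = 1. -/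
/-- `γ_∞(H)` for a subgroup `H` of `G`, viewed as a subgroup of `G`: the intersection of
all terms of the lower central series of `H`. -/
def gammaInfSub {G : Type*} [Group G] (H : Subgroup G) : Subgroup G :=
  ⨅ n : ℕ, (Subgroup.lowerCentralSeries (⊤ : Subgroup H) n).map H.subtype

open scoped commutatorElement in
/-- Commutators of elements normalizing a cyclic subgroup centralize it. -/
lemma commutator_mem_centralizer_of_cyclic {G : Type*} [Group G] (P : Subgroup G)
    (hcyc : IsCyclic P) {x y : G} (hx : x ∈ Subgroup.normalizer (P : Set G)) (hy : y ∈ Subgroup.normalizer (P : Set G)) :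
    ⁅x, y⁆ ∈ Subgroup.centralizer (P : Set G) := by
  obtain ⟨g, hg⟩ := hcyc.exists_generator
  -- conjugation exponents
  have hxg : x * (g : G) * x⁻¹ ∈ P := (Subgroup.mem_normalizer_iff.mp hx (g : G)).mp g.2
  have hyg : y * (g : G) * y⁻¹ ∈ P := (Subgroup.mem_normalizer_iff.mp hy (g : G)).mp g.2
  obtain ⟨m, hm⟩ := Subgroup.mem_zpowers_iff.mp (hg ⟨_, hxg⟩)
  obtain ⟨n, hn⟩ := Subgroup.mem_zpowers_iff.mp (hg ⟨_, hyg⟩)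
  have hm' : x * (g : G) * x⁻¹ = (g : G) ^ m := by
    have := congrArg (Subtype.val) hm
    push_cast at this
    exact this.symm
  have hn' : y * (g : G) * y⁻¹ = (g : G) ^ n := by
    have := congrArg (Subtype.val) hn
    push_cast at this
    exact this.symm
  have exy : (x * y) * (g : G) * (x * y)⁻¹ = (g : G) ^ (m * n) := by
    calc (x * y) * (g : G) * (x * y)⁻¹ = x * (y * (g : G) * y⁻¹) * x⁻¹ := by group
      _ = x * ((g : G) ^ n) * x⁻¹ := by rw [hn']
      _ = (x * (g : G) * x⁻¹) ^ n := by rw [conj_zpow]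
      _ = ((g : G) ^ m) ^ n := by rw [hm']
      _ = (g : G) ^ (m * n) := by rw [← zpow_mul]
  have eyx : (y * x) * (g : G) * (y * x)⁻¹ = (g : G) ^ (m * n) := by
    calc (y * x) * (g : G) * (y * x)⁻¹ = y * (x * (g : G) * x⁻¹) * y⁻¹ := by group
      _ = y * ((g : G) ^ m) * y⁻¹ := by rw [hm']
      _ = (y * (g : G) * y⁻¹) ^ m := by rw [conj_zpow]
      _ = ((g : G) ^ n) ^ m := by rw [hn']
      _ = (g : G) ^ (m * n) := by rw [← zpow_mul, mul_comm]
  have key : ∀ z ∈ P, (x * y) * z * (x * y)⁻¹ = (y * x) * z * (y * x)⁻¹ := by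
    intro z hz
    obtain ⟨k, hk⟩ := Subgroup.mem_zpowers_iff.mp (hg ⟨z, hz⟩)
    have hk' : (g : G) ^ k = z := by
      have := congrArg (Subtype.val) hk
      push_cast at this
      exact this
    rw [← hk']
    calc (x * y) * (g : G) ^ k * (x * y)⁻¹ = ((x * y) * (g : G) * (x * y)⁻¹) ^ k := by
          rw [conj_zpow]
      _ = ((g : G) ^ (m * n)) ^ k := by rw [exy]
      _ = ((y * x) * (g : G) * (y * x)⁻¹) ^ k := by rw [eyx]
      _ = (y * x) * (g : G) ^ k * (y * x)⁻¹ := by rw [conj_zpow]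
  rw [Subgroup.mem_centralizer_iff]
  intro h hh
  have hyxinv : (y * x)⁻¹ ∈ Subgroup.normalizer (P : Set G) := inv_mem (mul_mem hy hx)
  have hw : (y * x)⁻¹ * h * (y * x) ∈ P := by
    have := (Subgroup.mem_normalizer_iff.mp hyxinv h).mp hh
    simpa [mul_assoc] using this
  have e1 : (x * y) * ((y * x)⁻¹ * h * (y * x)) * (x * y)⁻¹ = h := by
    rw [key _ hw]; group
  have e2 : ⁅x, y⁆ * h * ⁅x, y⁆⁻¹ = (x * y) * ((y * x)⁻¹ * h * (y * x)) * (x * y)⁻¹ := by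
    rw [commutatorElement_def]; group
  have e3 : ⁅x, y⁆ * h * ⁅x, y⁆⁻¹ = h := e2.trans e1
  calc h * ⁅x, y⁆ = (⁅x, y⁆ * h * ⁅x, y⁆⁻¹) * ⁅x, y⁆ := by rw [e3]
    _ = ⁅x, y⁆ * h := by group

/-- If a subgroup is nilpotent as a group, its `γ_∞` is trivial. -/
lemma gammaInfSub_eq_bot_of_nilpotent {G : Type*} [Group G] (H : Subgroup G)
    (h : Group.IsNilpotent H) : gammaInfSub H = ⊥ := by
  obtain ⟨n, hn⟩ := nilpotent_iff_lowerCentralSeries.mp h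
  refine le_bot_iff.mp (le_trans (iInf_le _ n) ?_)
  rw [hn, Subgroup.map_bot]

/-- `γ_∞(H)` is contained in the commutator subgroup `⁅H, H⁆`. -/
lemma gammaInfSub_le_commutator {G : Type*} [Group G] (H : Subgroup G) :
    gammaInfSub H ≤ ⁅H, H⁆ := by
  refine le_trans (iInf_le _ 1) ?_
  rw [lowerCentralSeries_one, commutator_def, Subgroup.map_commutator]
  have : Subgroup.map H.subtype ⊤ = H := by
    rw [← MonoidHom.range_eq_map, Subgroup.range_subtype]
  rw [this]

/-- No tower of height 3: if `P₁, P₂, P₃` are subgroups of a finite group `G` of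
prime-power order, with `P₁` normalizing `P₂` and `P₃`, `P₂` normalizing `P₃`,
`P₂ = γ_∞(P₂P₁)`, `P₃ = γ_∞(P₃P₂)` and `P₃` cyclic, then `P₃ = 1`. -/
theorem no_tower_of_height_three_with_cyclic_top
    (G : Type*) [Group G] [Finite G] (P1 P2 P3 : Subgroup G)
    (h1 : ∃ p k : ℕ, p.Prime ∧ Nat.card P1 = p ^ k)
    (h2 : ∃ p k : ℕ, p.Prime ∧ Nat.card P2 = p ^ k)
    (h3 : ∃ p k : ℕ, p.Prime ∧ Nat.card P3 = p ^ k)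
    (hn12 : P1 ≤ Subgroup.normalizer (P2 : Set G)) (hn13 : P1 ≤ Subgroup.normalizer (P3 : Set G))
    (hn23 : P2 ≤ Subgroup.normalizer (P3 : Set G))
    (hP2 : P2 = gammaInfSub (P2 ⊔ P1)) (hP3 : P3 = gammaInfSub (P3 ⊔ P2))
    (hcyc : IsCyclic P3) :
    P3 = ⊥ := by
  classical
  -- Step 1: P2 centralizes P3.
  have hsup : P2 ⊔ P1 ≤ Subgroup.normalizer (P3 : Set G) := sup_le hn23 hn13
  have hP2cent : P2 ≤ Subgroup.centralizer (P3 : Set G) := by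
    rw [hP2]
    refine le_trans (gammaInfSub_le_commutator _) (Subgroup.commutator_le.mpr ?_)
    intro a ha b hb
    exact commutator_mem_centralizer_of_cyclic P3 hcyc (hsup ha) (hsup hb)
  -- Step 2: P3 ⊔ P2 is nilpotent.
  have hKnorm : P3 ⊔ P2 ≤ Subgroup.normalizer (P3 : Set G) := sup_le Subgroup.le_normalizer hn23
  have hP3comm : IsMulCommutative P3 :=
    ⟨⟨fun a b => by
      letI := hcyc.commGroup
      exact mul_comm a b⟩⟩
  have hKc : P3 ⊔ P2 ≤ Subgroup.centralizer (P3 : Set G) :=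
    sup_le (Subgroup.le_centralizer_iff_isMulCommutative.mpr hP3comm) hP2cent
  have hP3centK : P3 ≤ Subgroup.centralizer ((P3 ⊔ P2 : Subgroup G) : Set G) :=
    Subgroup.le_centralizer_iff.mp hKc
  have hN : (P3.subgroupOf (P3 ⊔ P2)).Normal := by
    rw [Subgroup.normal_subgroupOf_iff le_sup_left]
    intro h k hh hk
    exact (Subgroup.mem_normalizer_iff.mp (hKnorm hk) h).mp hh
  have hcen : P3.subgroupOf (P3 ⊔ P2) ≤ Subgroup.center ↥(P3 ⊔ P2) := by
    intro z hz
    rw [Subgroup.mem_center_iff]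
    intro k
    have hz' : (z : G) ∈ P3 := hz
    have := Subgroup.mem_centralizer_iff.mp (hP3centK hz') (k : G) k.2
    exact Subtype.ext this
  -- the quotient is nilpotent since it is an image of the p-group P2
  obtain ⟨p, k', hp, hcard⟩ := h2
  haveI : Fact p.Prime := ⟨hp⟩
  haveI hnilP2 : Group.IsNilpotent ↥P2 := (IsPGroup.of_card hcard).isNilpotent
  let ψ : ↥P2 →* ↥(P3 ⊔ P2) ⧸ (P3.subgroupOf (P3 ⊔ P2)) :=
    (QuotientGroup.mk' _).comp (Subgroup.inclusion le_sup_right)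
  have hψ : Function.Surjective ψ := by
    rw [← MonoidHom.range_eq_top]
    have hr : ψ.range = (P2.subgroupOf (P3 ⊔ P2)).map
        (QuotientGroup.mk' (P3.subgroupOf (P3 ⊔ P2))) := by
      rw [MonoidHom.range_comp, Subgroup.inclusion_range]
    have htop : P3.subgroupOf (P3 ⊔ P2) ⊔ P2.subgroupOf (P3 ⊔ P2) = ⊤ := by
      rw [← Subgroup.subgroupOf_sup le_sup_left le_sup_right]
      exact Subgroup.subgroupOf_self _
    have hmapN : (P3.subgroupOf (P3 ⊔ P2)).map
        (QuotientGroup.mk' (P3.subgroupOf (P3 ⊔ P2))) = ⊥ :=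
      (Subgroup.map_eq_bot_iff _).mpr (by rw [QuotientGroup.ker_mk'])
    have hmt : ((⊤ : Subgroup ↥(P3 ⊔ P2)).map
        (QuotientGroup.mk' (P3.subgroupOf (P3 ⊔ P2)))) = ⊤ :=
      Subgroup.map_top_of_surjective _ (QuotientGroup.mk'_surjective _)
    rw [hr, ← hmt, ← htop, Subgroup.map_sup, hmapN, bot_sup_eq]
  haveI : Group.IsNilpotent (↥(P3 ⊔ P2) ⧸ (P3.subgroupOf (P3 ⊔ P2))) :=
    nilpotent_of_surjective ψ hψ
  haveI hnilK : Group.IsNilpotent ↥(P3 ⊔ P2) :=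
    isNilpotent_of_ker_le_center (QuotientGroup.mk' (P3.subgroupOf (P3 ⊔ P2)))
      (by rw [QuotientGroup.ker_mk']; exact hcen)
  -- Step 3: conclude
  rw [hP3]
  exact gammaInfSub_eq_bot_of_nilpotent _ hnilK
end

section
/- Let G be a profinite group, and let K and K' be infinite procyclic closed normal subgroups of G with K ∩ K' = 1. Suppose a, b ∈ G are such that a centralizes K' and acts on K with [K, ᵢa] of finite index in K for all i, while b centralizes K and acts on K' with [K', ᵢb] of finite index in K' for all i. Then for every n, the subgroup generated by {[x, ₙ(ab)] : x ∈ K × K'} contains a subgroup isomorphic to Z_p ⊕ Z_p; in particular ab admits no procyclic Engel sink. -/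
/-- `S` is an Engel sink of `g`: for every `x` all sufficiently long commutators
`[x, g, ..., g]` lie in `S`. -/
def IsEngelSink {G : Type*} [Group G] (S : Set G) (g : G) : Prop :=
  ∀ x : G, ∃ N : ℕ, ∀ n ≥ N, engel x g n ∈ S

/-- The closed subgroup `[S, a]` topologically generated by the commutators
`[x, a] = x⁻¹a⁻¹xa` with `x ∈ S`. -/
def commSub {G : Type*} [Group G] [TopologicalSpace G] [IsTopologicalGroup G]
    (a : G) (S : Subgroup G) : Subgroup G :=
  (Subgroup.closure {z : G | ∃ x ∈ S, z = x⁻¹ * a⁻¹ * x * a}).topologicalClosure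


open Multiplicative

namespace EngelAux

variable {p : ℕ} [Fact p.Prime]

/-- Every abstract additive endomorphism of `ℤ_p` is multiplication by its value at 1. -/
theorem padic_addHom_eq (ψ : ℤ_[p] →+ ℤ_[p]) (x : ℤ_[p]) : ψ x = ψ 1 * x := by
  have hdvd : ∀ n : ℕ, (p : ℤ_[p]) ^ n ∣ ψ x - ψ 1 * x := by
    intro n
    obtain ⟨c, hc⟩ : (p : ℤ_[p]) ^ n ∣ x - (x.appr n : ℤ_[p]) := by
      simpa [Ideal.mem_span_singleton] using PadicInt.appr_spec n x
    have h2 : ψ ((p : ℤ_[p]) ^ n * c) = (p : ℤ_[p]) ^ n * ψ c := by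
      have e0 : (p : ℤ_[p]) ^ n * c = (p ^ n : ℕ) • c := by simp [nsmul_eq_mul]
      rw [e0, map_nsmul ψ, nsmul_eq_mul]; push_cast; ring
    have h3 : ψ (x.appr n : ℤ_[p]) = (x.appr n : ℤ_[p]) * ψ 1 := by
      have e0 : ((x.appr n : ℕ) : ℤ_[p]) = (x.appr n : ℕ) • (1 : ℤ_[p]) := by simp
      rw [e0, map_nsmul ψ, nsmul_eq_mul, nsmul_eq_mul]; simp
    have key : ψ x - ψ 1 * x = (p : ℤ_[p]) ^ n * ψ c + (-((p : ℤ_[p]) ^ n * c)) * ψ 1 := by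
      have e1 : ψ x = ψ (x.appr n : ℤ_[p]) + ψ ((p : ℤ_[p]) ^ n * c) := by
        rw [← map_add]; congr 1; rw [← hc]; ring
      have e2 : (x.appr n : ℤ_[p]) = x - (p : ℤ_[p]) ^ n * c := by rw [← hc]; ring
      rw [e1, h2, h3, e2]; ring
    rw [key]
    exact dvd_add (Dvd.intro _ rfl) ⟨-(c * ψ 1), by ring⟩
  by_contra hne
  have hne' : ψ x - ψ 1 * x ≠ 0 := sub_ne_zero.mpr hne
  have hpos : 0 < ‖ψ x - ψ 1 * x‖ := norm_pos_iff.mpr hne'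
  have hp1 : (1 : ℝ) < (p : ℝ) := by exact_mod_cast (Fact.out : p.Prime).one_lt
  obtain ⟨n, hn⟩ : ∃ n : ℕ, ((p : ℝ)⁻¹) ^ n < ‖ψ x - ψ 1 * x‖ :=
    exists_pow_lt_of_lt_one hpos (inv_lt_one_of_one_lt₀ hp1)
  obtain ⟨c, hc⟩ := hdvd n
  have : ‖ψ x - ψ 1 * x‖ ≤ ((p : ℝ)⁻¹) ^ n := by
    rw [hc]
    calc ‖(p : ℤ_[p]) ^ n * c‖ ≤ ‖(p : ℤ_[p]) ^ n‖ * ‖c‖ := norm_mul_le _ _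
      _ ≤ ‖(p : ℤ_[p]) ^ n‖ * 1 :=
          mul_le_mul_of_nonneg_left (PadicInt.norm_le_one c) (norm_nonneg _)
      _ = ((p : ℝ)⁻¹) ^ n := by
          rw [mul_one, PadicInt.norm_p_pow, zpow_neg, inv_pow, zpow_natCast]
  exact absurd (lt_of_le_of_lt this hn) (lt_irrefl _)



section
variable {G : Type*} [Group G] {K : Subgroup G} (a : G)
  (hKn : K.Normal) (hcomm : ∀ x y : K, x * y = y * x)

/-- The map `x ↦ [x,a]` as a homomorphism of an abelian normal subgroup. -/
def Fmap : K →* K where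
  toFun x := ⟨(x : G)⁻¹ * a⁻¹ * x * a, by
    have h1 : (a⁻¹ * x * a : G) ∈ K := by
      simpa [mul_assoc] using hKn.conj_mem (x : G) x.2 a⁻¹
    simpa [mul_assoc] using K.mul_mem (K.inv_mem x.2) h1⟩
  map_one' := by ext; simp
  map_mul' x y := by
    have hG : ∀ u v : G, u ∈ K → v ∈ K → u * v = v * u := fun u v hu hv =>
      congrArg Subtype.val (hcomm ⟨u, hu⟩ ⟨v, hv⟩)
    have hX : (a⁻¹ * x * a : G) ∈ K := by
      simpa [mul_assoc] using hKn.conj_mem (x : G) x.2 a⁻¹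
    ext
    show ((x * y : K) : G)⁻¹ * a⁻¹ * ((x * y : K) : G) * a
        = ((x : G)⁻¹ * a⁻¹ * x * a) * ((y : G)⁻¹ * a⁻¹ * y * a)
    push_cast
    have c1 : (y : G)⁻¹ * (x : G)⁻¹ = (x : G)⁻¹ * (y : G)⁻¹ :=
      hG _ _ (K.inv_mem y.2) (K.inv_mem x.2)
    have c2 : (a⁻¹ * x * a) * (y : G)⁻¹ = (y : G)⁻¹ * (a⁻¹ * x * a) :=
      hG _ _ hX (K.inv_mem y.2)
    calc ((x : G) * y)⁻¹ * a⁻¹ * ((x : G) * y) * a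
        = ((y : G)⁻¹ * (x : G)⁻¹) * ((a⁻¹ * x * a) * (a⁻¹ * (y : G) * a)) := by
          group
      _ = ((x : G)⁻¹ * (y : G)⁻¹) * ((a⁻¹ * x * a) * (a⁻¹ * (y : G) * a)) := by rw [c1]
      _ = (x : G)⁻¹ * ((y : G)⁻¹ * (a⁻¹ * x * a)) * (a⁻¹ * (y : G) * a) := by group
      _ = (x : G)⁻¹ * ((a⁻¹ * x * a) * (y : G)⁻¹) * (a⁻¹ * (y : G) * a) := by rw [c2]
      _ = (x : G)⁻¹ * a⁻¹ * x * a * ((y : G)⁻¹ * a⁻¹ * y * a) := by group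

theorem Fmap_coe (x : K) : ((Fmap a hKn hcomm x : K) : G) = (x : G)⁻¹ * a⁻¹ * x * a := rfl

/-- For `x ∈ K`, the iterated Engel commutator with `a*b` is computed by iterating `Fmap a`. -/
theorem engel_eq_iterate (b : G) (hbK : ∀ g ∈ K, b * g = g * b) (x : K) :
    ∀ n : ℕ, engel (x : G) (a * b) n = (((Fmap a hKn hcomm)^[n] x : K) : G)
  | 0 => rfl
  | n + 1 => by
    have ih := engel_eq_iterate b hbK x n
    set y : K := (Fmap a hKn hcomm)^[n] x with hy
    have hstep : engel (x : G) (a * b) (n + 1)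
        = (y : G)⁻¹ * (a * b)⁻¹ * (y : G) * (a * b) := by
      show (engel (x : G) (a * b) n)⁻¹ * (a * b)⁻¹ * engel (x : G) (a * b) n * (a * b) = _
      rw [ih]
    have hconj : (a * b)⁻¹ * (y : G) * (a * b) = a⁻¹ * y * a := by
      have hyK : (a⁻¹ * y * a : G) ∈ K := by
        simpa [mul_assoc] using hKn.conj_mem (y : G) y.2 a⁻¹
      have hcom := hbK _ hyK
      calc (a * b)⁻¹ * (y : G) * (a * b) = b⁻¹ * ((a⁻¹ * y * a) * b) := by group
        _ = b⁻¹ * (b * (a⁻¹ * y * a)) := by rw [← hcom]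
        _ = a⁻¹ * y * a := by group
    rw [Function.iterate_succ_apply', Fmap_coe, hstep]
    rw [show (y : G)⁻¹ * (a * b)⁻¹ * (y : G) * (a * b)
        = (y : G)⁻¹ * ((a * b)⁻¹ * (y : G) * (a * b)) by group, hconj]
    group
    rfl




end
section
variable {G : Type*} [Group G] {K' : Subgroup G} (b : G)
  (hK'n : K'.Normal) (hcomm' : ∀ x y : K', x * y = y * x)

/-- For `y ∈ K'` with `a` centralizing `K'`, the iterated Engel commutator with `a*b`
is computed by iterating `Fmap b`. -/
theorem engel_eq_iterate' (a : G) (haK' : ∀ g ∈ K', a * g = g * a) (x : K') :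
    ∀ n : ℕ, engel (x : G) (a * b) n = (((Fmap b hK'n hcomm')^[n] x : K') : G)
  | 0 => rfl
  | n + 1 => by
    have ih := engel_eq_iterate' a haK' x n
    set y : K' := (Fmap b hK'n hcomm')^[n] x with hy
    have hstep : engel (x : G) (a * b) (n + 1)
        = (y : G)⁻¹ * (a * b)⁻¹ * (y : G) * (a * b) := by
      show (engel (x : G) (a * b) n)⁻¹ * (a * b)⁻¹ * engel (x : G) (a * b) n * (a * b) = _
      rw [ih]
    have hconj : (a * b)⁻¹ * (y : G) * (a * b) = b⁻¹ * y * b := by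
      have hcom := haK' _ y.2
      calc (a * b)⁻¹ * (y : G) * (a * b) = b⁻¹ * (a⁻¹ * ((y : G) * a)) * b := by group
        _ = b⁻¹ * (a⁻¹ * (a * (y : G))) * b := by rw [← hcom]
        _ = b⁻¹ * y * b := by group
    rw [Function.iterate_succ_apply', Fmap_coe, hstep]
    rw [show (y : G)⁻¹ * (a * b)⁻¹ * (y : G) * (a * b)
        = (y : G)⁻¹ * ((a * b)⁻¹ * (y : G) * (a * b)) by group, hconj]
    group
    rfl




end
section
variable {G : Type*} [Group G] {K : Subgroup G}

/-- Transport of an endomorphism of `K` to an additive endomorphism of `ℤ_p`. -/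
noncomputable def psiOf (F : K →* K) (e : K ≃* Multiplicative ℤ_[p]) : ℤ_[p] →+ ℤ_[p] :=
  AddMonoidHom.mk' (fun z => (e (F (e.symm (ofAdd z)))).toAdd)
    (fun x y => by
      rw [ofAdd_add, map_mul, map_mul, map_mul, toAdd_mul])

theorem psiOf_spec (F : K →* K) (e : K ≃* Multiplicative ℤ_[p]) (x : K) :
    (e (F x)).toAdd = psiOf F e ((e x).toAdd) := by
  simp [psiOf]


theorem psiOf_iterate (F : K →* K) (e : K ≃* Multiplicative ℤ_[p]) (n : ℕ) (x : K) :
    (e (F^[n] x)).toAdd = (psiOf F e 1) ^ n * (e x).toAdd := by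
  induction n with
  | zero => simp
  | succ n ih =>
    rw [Function.iterate_succ_apply', psiOf_spec F e, padic_addHom_eq (psiOf F e), ih,
      pow_succ]
    ring

theorem iterate_injective (F : K →* K) (e : K ≃* Multiplicative ℤ_[p])
    (ht : psiOf F e 1 ≠ 0) (n : ℕ) : Function.Injective (⇑F)^[n] := by
  intro x y h
  have h2 := psiOf_iterate F e n x
  rw [h, psiOf_iterate F e n y] at h2
  have h3 : (e x).toAdd = (e y).toAdd := mul_left_cancel₀ (pow_ne_zero n ht) h2.symm
  exact e.injective (toAdd.injective h3)

variable [TopologicalSpace G] [IsTopologicalGroup G] [T2Space G]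

theorem psi_ne_zero (a : G) (hKn : K.Normal) (hcomm : ∀ x y : K, x * y = y * x)
    (e : K ≃* Multiplicative ℤ_[p]) (hinf : Infinite K)
    (hrel : (commSub a K).relIndex K ≠ 0) :
    psiOf (Fmap a hKn hcomm) e 1 ≠ 0 := by
  intro h0
  have hF1 : ∀ x : K, Fmap a hKn hcomm x = 1 := by
    intro x
    have h1 : (e (Fmap a hKn hcomm x)).toAdd = 0 := by
      rw [psiOf_spec, padic_addHom_eq (psiOf (Fmap a hKn hcomm) e), h0, zero_mul]
    have h2 : e (Fmap a hKn hcomm x) = 1 := toAdd.injective (by simpa using h1)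
    exact e.injective (by simpa using h2)
  have hset : {z : G | ∃ x ∈ K, z = x⁻¹ * a⁻¹ * x * a} ⊆ ((⊥ : Subgroup G) : Set G) := by
    rintro z ⟨x, hx, rfl⟩
    have := congrArg Subtype.val (hF1 ⟨x, hx⟩)
    simp only [Subgroup.coe_bot, Set.mem_singleton_iff]
    simpa [Fmap_coe] using this
  have hclos : Subgroup.closure {z : G | ∃ x ∈ K, z = x⁻¹ * a⁻¹ * x * a} = ⊥ :=
    le_bot_iff.mp ((Subgroup.closure_le ⊥).mpr hset)
  have hbot : commSub a K = ⊥ := by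
    rw [commSub, hclos]
    apply SetLike.ext'
    show closure (((⊥ : Subgroup G) : Set G)) = _
    rw [Subgroup.coe_bot]
    exact isClosed_singleton.closure_eq
  rw [hbot, Subgroup.relIndex_bot_left] at hrel
  exact hrel (Nat.card_eq_zero_of_infinite)




theorem dvd_pow_p {p : ℕ} [Fact p.Prime] {x : ℤ_[p]} (hx : x ≠ 0) :
    ∃ γ : ℕ, x ∣ (p : ℤ_[p]) ^ γ := by
  refine ⟨x.valuation, ⟨((PadicInt.unitCoeff hx)⁻¹ : ℤ_[p]ˣ), ?_⟩⟩
  have hspec := PadicInt.unitCoeff_spec hx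
  calc (p : ℤ_[p]) ^ x.valuation
      = ((PadicInt.unitCoeff hx : ℤ_[p]) * (p : ℤ_[p]) ^ x.valuation)
        * ((PadicInt.unitCoeff hx)⁻¹ : ℤ_[p]ˣ) := by
        rw [mul_comm ((PadicInt.unitCoeff hx : ℤ_[p])) _, mul_assoc, ← Units.val_mul,
          mul_inv_cancel, Units.val_one, mul_one]
    _ = x * ((PadicInt.unitCoeff hx)⁻¹ : ℤ_[p]ˣ) := by rw [← hspec]


theorem exists_openNormal {G : Type*} [Group G] [TopologicalSpace G] [IsTopologicalGroup G]
    [CompactSpace G] [T2Space G] [TotallyDisconnectedSpace G] {V : Set G}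
    (hV : IsOpen V) (h1 : (1 : G) ∈ V) :
    ∃ N : OpenNormalSubgroup G, (N : Set G) ⊆ V := by
  obtain ⟨W, hW, h1W, hWV⟩ := compact_exists_isClopen_in_isOpen hV h1
  obtain ⟨N, hN⟩ := IsTopologicalGroup.exist_openNormalSubgroup_sub_clopen_nhds_of_one hW h1W
  exact ⟨N, hN.trans hWV⟩

theorem exists_dependency (p : ℕ) [hpf : Fact p.Prime] (m l : ℤ) :
    ∃ i j : ℕ, i < p ∧ j < p ∧ ¬(i = 0 ∧ j = 0) ∧
      ∃ x y : ℤ, (i : ℤ) * m + (j : ℤ) * l = (p : ℤ) * m * x + (p : ℤ) * l * y := by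
  have hp := hpf.out
  haveI : NeZero p := ⟨hp.ne_zero⟩
  by_cases hml : m = 0 ∧ l = 0
  · exact ⟨1, 0, hp.one_lt, hp.pos, by simp, 0, 0, by simp [hml.1, hml.2]⟩
  have hg0 : m ≠ 0 ∨ l ≠ 0 := by tauto
  set g : ℤ := (Int.gcd m l : ℤ) with hgdef
  have hgdvd_m : g ∣ m := Int.gcd_dvd_left m l
  have hgdvd_l : g ∣ l := Int.gcd_dvd_right m l
  set m' : ℤ := m / g with hm'def
  set l' : ℤ := l / g with hl'def
  have hm : g * m' = m := Int.mul_ediv_cancel' hgdvd_m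
  have hl : g * l' = l := Int.mul_ediv_cancel' hgdvd_l
  have hBez : g = m * Int.gcdA m l + l * Int.gcdB m l := Int.gcd_eq_gcd_ab m l
  have key : ∃ i j : ℕ, i < p ∧ j < p ∧ ¬(i = 0 ∧ j = 0) ∧ (p : ℤ) ∣ ((i : ℤ) * m' + (j : ℤ) * l') := by
    by_cases hm' : ((m' : ZMod p) = 0)
    · refine ⟨1, 0, hp.one_lt, hp.pos, by simp, ?_⟩
      have := (ZMod.intCast_zmod_eq_zero_iff_dvd m' p).mp hm'
      simpa using this
    · set iz : ZMod p := -(l' : ZMod p) * (m' : ZMod p)⁻¹ with hiz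
      refine ⟨iz.val, 1, ZMod.val_lt iz, hp.one_lt, by simp, ?_⟩
      apply (ZMod.intCast_zmod_eq_zero_iff_dvd _ p).mp
      push_cast
      rw [ZMod.natCast_val, ZMod.cast_id]
      rw [hiz, mul_assoc, inv_mul_cancel₀ hm']
      ring
  obtain ⟨i, j, hi, hj, hnz, c, hc⟩ := key
  refine ⟨i, j, hi, hj, hnz, c * Int.gcdA m l, c * Int.gcdB m l, ?_⟩
  calc (i : ℤ) * m + (j : ℤ) * l = g * ((i : ℤ) * m' + (j : ℤ) * l') := by
        rw [← hm, ← hl]; ring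
    _ = g * ((p : ℤ) * c) := by rw [hc]
    _ = (p : ℤ) * c * (m * Int.gcdA m l + l * Int.gcdB m l) := by rw [← hBez]; ring
    _ = (p : ℤ) * m * (c * Int.gcdA m l) + (p : ℤ) * l * (c * Int.gcdB m l) := by ring

end

section Topology

variable {p : ℕ} [Fact p.Prime] {G : Type*} [Group G] [TopologicalSpace G]
  [IsTopologicalGroup G] [T2Space G] {K : Subgroup G}

/-- The subgroup of `m`-th powers of an abelian subgroup. -/
def powSub (K : Subgroup G) (hcomm : ∀ x y : K, x * y = y * x) (m : ℕ) : Subgroup K where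
  carrier := Set.range fun x : K => x ^ m
  one_mem' := ⟨1, one_pow m⟩
  mul_mem' := by
    rintro _ _ ⟨x, rfl⟩ ⟨y, rfl⟩
    exact ⟨x * y, Commute.mul_pow (hcomm x y) m⟩
  inv_mem' := by
    rintro _ ⟨x, rfl⟩
    exact ⟨x⁻¹, inv_pow x m⟩

theorem powSub_eq_ker (e : K ≃* Multiplicative ℤ_[p]) (hcomm : ∀ x y : K, x * y = y * x)
    (n : ℕ) :
    powSub K hcomm (p ^ n) = (MonoidHom.mk' (fun x : K => ofAdd (PadicInt.toZModPow n ((e x).toAdd)))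
      (fun x y => by rw [map_mul, toAdd_mul, map_add, ofAdd_add])).ker := by
  ext x
  constructor
  · rintro ⟨z, rfl⟩
    have h1 : (e (z ^ p ^ n)).toAdd = ((p ^ n : ℕ) : ℤ_[p]) * (e z).toAdd := by
      rw [map_pow, toAdd_pow, nsmul_eq_mul]
    show ofAdd (PadicInt.toZModPow n ((e (z ^ p ^ n)).toAdd)) = 1
    rw [h1]
    have h2 : PadicInt.toZModPow n (((p ^ n : ℕ) : ℤ_[p]) * (e z).toAdd) = 0 := by
      have : ((p ^ n : ℕ) : ℤ_[p]) * (e z).toAdd ∈ RingHom.ker (PadicInt.toZModPow (p := p) n) := by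
        rw [PadicInt.ker_toZModPow, Ideal.mem_span_singleton]
        exact ⟨(e z).toAdd, by push_cast; ring⟩
      exact this
    rw [h2]
    rfl
  · intro hx
    have h1 : PadicInt.toZModPow n ((e x).toAdd) = 0 := by
      have : ofAdd (PadicInt.toZModPow n ((e x).toAdd)) = 1 := hx
      exact ofAdd.injective this
    have h2 : (e x).toAdd ∈ RingHom.ker (PadicInt.toZModPow (p := p) n) := h1
    rw [PadicInt.ker_toZModPow, Ideal.mem_span_singleton] at h2
    obtain ⟨c, hc⟩ := h2
    refine ⟨e.symm (ofAdd c), ?_⟩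
    apply e.injective
    apply toAdd.injective
    rw [map_pow, toAdd_pow, MulEquiv.apply_symm_apply, toAdd_ofAdd, hc, nsmul_eq_mul]
    push_cast
    ring

theorem powSub_isClosed [CompactSpace K] (hcomm : ∀ x y : K, x * y = y * x) (m : ℕ) :
    IsClosed ((powSub K hcomm m : Subgroup K) : Set K) :=
  (isCompact_range (continuous_pow m)).isClosed

theorem powSub_isOpen [CompactSpace K] (e : K ≃* Multiplicative ℤ_[p])
    (hcomm : ∀ x y : K, x * y = y * x) (n : ℕ) :
    IsOpen ((powSub K hcomm (p ^ n) : Subgroup K) : Set K) := by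
  haveI : NeZero p := ⟨(Fact.out : p.Prime).ne_zero⟩
  haveI : Subgroup.FiniteIndex (powSub K hcomm (p ^ n)) := by
    rw [powSub_eq_ker e hcomm n]
    haveI : Finite (K ⧸ (MonoidHom.mk' (fun x : K => ofAdd (PadicInt.toZModPow n ((e x).toAdd)))
      (fun x y => by rw [map_mul, toAdd_mul, map_add, ofAdd_add])).ker) :=
      Finite.of_injective _ (QuotientGroup.kerLift_injective _)
    exact Subgroup.finiteIndex_of_finite_quotient
  exact Subgroup.isOpen_of_isClosed_of_finiteIndex _ (powSub_isClosed hcomm _)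

theorem e_continuous [CompactSpace K] (e : K ≃* Multiplicative ℤ_[p])
    (hcomm : ∀ x y : K, x * y = y * x) :
    Continuous (fun x : K => (e x).toAdd) := by
  rw [continuous_iff_continuousAt]
  intro x₀
  rw [ContinuousAt, Metric.tendsto_nhds]
  intro ε hε
  have hp1 : (1 : ℝ) < (p : ℝ) := by exact_mod_cast (Fact.out : p.Prime).one_lt
  obtain ⟨n, hn⟩ : ∃ n : ℕ, ((p : ℝ)⁻¹) ^ n < ε :=
    exists_pow_lt_of_lt_one hε (inv_lt_one_of_one_lt₀ hp1)
  have hU : IsOpen ((fun y : K => x₀ * y) '' (powSub K hcomm (p ^ n))) :=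
    (isOpenMap_mul_left x₀) _ (powSub_isOpen e hcomm n)
  have hU1 : x₀ ∈ ((fun y : K => x₀ * y) '' (powSub K hcomm (p ^ n))) :=
    ⟨1, Subgroup.one_mem _, mul_one x₀⟩
  apply Filter.eventually_of_mem (hU.mem_nhds hU1)
  rintro _ ⟨y, hy, rfl⟩
  obtain ⟨z, rfl⟩ := hy
  have hdist : dist ((e (x₀ * z ^ p ^ n)).toAdd) ((e x₀).toAdd) = ‖(e (z ^ p ^ n)).toAdd‖ := by
    rw [dist_eq_norm, map_mul, toAdd_mul]
    congr 1
    ring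
  rw [hdist, map_pow, toAdd_pow, nsmul_eq_mul]
  calc ‖((p ^ n : ℕ) : ℤ_[p]) * (e z).toAdd‖
      ≤ ‖((p ^ n : ℕ) : ℤ_[p])‖ * ‖(e z).toAdd‖ := norm_mul_le _ _
    _ ≤ ‖((p ^ n : ℕ) : ℤ_[p])‖ * 1 :=
        mul_le_mul_of_nonneg_left (PadicInt.norm_le_one _) (norm_nonneg _)
    _ = ((p : ℝ)⁻¹) ^ n := by
        rw [mul_one]
        push_cast
        rw [PadicInt.norm_p_pow, zpow_neg, inv_pow, zpow_natCast]
    _ < ε := hn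

end Topology

end EngelAux


open Multiplicative EngelAux Pointwise

/-- Let `G` be a profinite group with infinite procyclic closed normal subgroups
`K ≅ ℤ_p` and `K' ≅ ℤ_p` with `K ∩ K' = 1`.  Suppose `a` centralizes `K'` and
`[K, ᵢa]` has finite index in `K` for all `i ≥ 1`, while `b` centralizes `K` and
`[K', ᵢb]` has finite index in `K'` for all `i ≥ 1`.  Then for every `n` the subgroup
generated by the commutators `[x, ₙ(ab)]`, `x ∈ K ⊔ K'`, contains a subgroup
isomorphic to `ℤ_p ⊕ ℤ_p`; in particular `ab` admits no Engel sink generating a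
procyclic subgroup. -/
theorem engel_subgroup_contains_Zp_sum
    (p : ℕ) [Fact p.Prime] (G : Type*) [Group G] [TopologicalSpace G]
    [IsTopologicalGroup G] [CompactSpace G] [T2Space G] [TotallyDisconnectedSpace G]
    (K K' : Subgroup G) (hKn : K.Normal) (hK'n : K'.Normal)
    (hKclosed : IsClosed (K : Set G)) (hK'closed : IsClosed (K' : Set G))
    (hKiso : Nonempty (K ≃* Multiplicative ℤ_[p]))
    (hK'iso : Nonempty (K' ≃* Multiplicative ℤ_[p]))
    (hdisj : K ⊓ K' = ⊥)
    (a b : G)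
    (haK' : ∀ x ∈ K', a * x = x * a)
    (hbK : ∀ x ∈ K, b * x = x * b)
    (haK : ∀ i : ℕ, 1 ≤ i → ((commSub a)^[i] K).relIndex K ≠ 0)
    (hbK' : ∀ i : ℕ, 1 ≤ i → ((commSub b)^[i] K').relIndex K' ≠ 0) :
    (∀ n : ℕ, ∃ W : Subgroup G,
        W ≤ Subgroup.closure {z : G | ∃ x ∈ K ⊔ K', z = engel x (a * b) n} ∧
        Nonempty (W ≃* Multiplicative (ℤ_[p] × ℤ_[p]))) ∧
      ∀ S : Set G, IsEngelSink S (a * b) →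
        ¬ IsProcyclic ((Subgroup.closure S).topologicalClosure) := by
  obtain ⟨e⟩ := hKiso
  obtain ⟨e'⟩ := hK'iso
  -- commutativity facts
  have hcommK : ∀ x y : K, x * y = y * x := fun x y =>
    e.injective (by rw [map_mul, map_mul, mul_comm])
  have hcommK' : ∀ x y : K', x * y = y * x := fun x y =>
    e'.injective (by rw [map_mul, map_mul, mul_comm])
  have hcommKK' : ∀ u ∈ K, ∀ v ∈ K', u * v = v * u := by
    intro u hu v hv
    have h1 : v⁻¹ * u * v ∈ K := by simpa [mul_assoc] using hKn.conj_mem u hu v⁻¹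
    have h2 : u⁻¹ * v⁻¹ * u ∈ K' := by
      simpa [mul_assoc] using hK'n.conj_mem v⁻¹ (K'.inv_mem hv) u⁻¹
    have hzK : u⁻¹ * v⁻¹ * u * v ∈ K := by
      have := K.mul_mem (K.inv_mem hu) h1
      simpa [mul_assoc] using this
    have hzK' : u⁻¹ * v⁻¹ * u * v ∈ K' := K'.mul_mem h2 hv
    have hz : u⁻¹ * v⁻¹ * u * v = 1 := by
      have : u⁻¹ * v⁻¹ * u * v ∈ K ⊓ K' := ⟨hzK, hzK'⟩
      rw [hdisj] at this
      exact this
    have hfin : v * u * (u⁻¹ * v⁻¹ * u * v) = u * v := by group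
    rw [hz, mul_one] at hfin
    exact hfin.symm
  -- the Engel homomorphisms
  set Fa : K →* K := Fmap a hKn hcommK with hFa
  set Fb : K' →* K' := Fmap b hK'n hcommK' with hFb
  set ta : ℤ_[p] := psiOf Fa e 1 with hta_def
  set tb : ℤ_[p] := psiOf Fb e' 1 with htb_def
  haveI : Infinite ℤ_[p] := Infinite.of_injective ((↑) : ℕ → ℤ_[p]) Nat.cast_injective
  have hInfK : Infinite K :=
    Infinite.of_injective (fun z : ℤ_[p] => e.symm (ofAdd z))
      (fun x y h => ofAdd.injective (e.symm.injective h))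
  have hInfK' : Infinite K' :=
    Infinite.of_injective (fun z : ℤ_[p] => e'.symm (ofAdd z))
      (fun x y h => ofAdd.injective (e'.symm.injective h))
  have hta : ta ≠ 0 := by
    apply psi_ne_zero a hKn hcommK e hInfK
    have := haK 1 le_rfl
    rwa [Function.iterate_one] at this
  have htb : tb ≠ 0 := by
    apply psi_ne_zero b hK'n hcommK' e' hInfK'
    have := hbK' 1 le_rfl
    rwa [Function.iterate_one] at this
  have hswap : ∀ (x : K) (y : K'), (y : G) * x = (x : G) * y := fun x y =>
    (hcommKK' x x.2 y y.2).symm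
  constructor
  · -- Part 1
    intro n
    have hmul : ∀ z w : Multiplicative (ℤ_[p] × ℤ_[p]),
        (((⇑Fa)^[n] (e.symm (ofAdd (z * w).toAdd.1)) : K) : G)
          * (((⇑Fb)^[n] (e'.symm (ofAdd (z * w).toAdd.2)) : K') : G)
        = ((((⇑Fa)^[n] (e.symm (ofAdd z.toAdd.1)) : K) : G)
            * (((⇑Fb)^[n] (e'.symm (ofAdd z.toAdd.2)) : K') : G))
          * ((((⇑Fa)^[n] (e.symm (ofAdd w.toAdd.1)) : K) : G)
            * (((⇑Fb)^[n] (e'.symm (ofAdd w.toAdd.2)) : K') : G)) := by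
      intro z w
      have h1 : (z * w).toAdd.1 = z.toAdd.1 + w.toAdd.1 := rfl
      have h2 : (z * w).toAdd.2 = z.toAdd.2 + w.toAdd.2 := rfl
      rw [h1, h2, ofAdd_add, ofAdd_add, map_mul, map_mul, iterate_map_mul,
        iterate_map_mul, Subgroup.coe_mul, Subgroup.coe_mul]
      set A := (((⇑Fa)^[n] (e.symm (ofAdd z.toAdd.1)) : K) : G)
      set B := (((⇑Fa)^[n] (e.symm (ofAdd w.toAdd.1)) : K) : G)
      set C := (((⇑Fb)^[n] (e'.symm (ofAdd z.toAdd.2)) : K') : G)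
      set D := (((⇑Fb)^[n] (e'.symm (ofAdd w.toAdd.2)) : K') : G)
      have hsw : C * B = B * C := hswap _ _
      calc A * B * (C * D) = A * (B * C) * D := by group
        _ = A * (C * B) * D := by rw [hsw]
        _ = A * C * (B * D) := by group
    set Φ : Multiplicative (ℤ_[p] × ℤ_[p]) →* G := MonoidHom.mk'
      (fun z => (((⇑Fa)^[n] (e.symm (ofAdd z.toAdd.1)) : K) : G)
        * (((⇑Fb)^[n] (e'.symm (ofAdd z.toAdd.2)) : K') : G)) hmul with hΦ
    have hΦinj : Function.Injective Φ := by
      rw [injective_iff_map_eq_one]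
      intro z hz
      have hz' : (((⇑Fa)^[n] (e.symm (ofAdd z.toAdd.1)) : K) : G)
          * (((⇑Fb)^[n] (e'.symm (ofAdd z.toAdd.2)) : K') : G) = 1 := hz
      set u : K := (⇑Fa)^[n] (e.symm (ofAdd z.toAdd.1))
      set v : K' := (⇑Fb)^[n] (e'.symm (ofAdd z.toAdd.2))
      have hu1 : (u : G) = ((v : G))⁻¹ := by
        rw [eq_inv_iff_mul_eq_one]; exact hz'
      have humem : (u : G) ∈ K ⊓ K' := ⟨u.2, by rw [hu1]; exact K'.inv_mem v.2⟩
      rw [hdisj] at humem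
      have hu0 : (u : G) = 1 := by simpa [Subgroup.mem_bot] using humem
      have hu : u = 1 := Subtype.ext (by simpa using hu0)
      have hv : v = 1 := by
        have h' := hu1
        rw [hu0] at h'
        exact Subtype.ext (by simpa using (inv_eq_one.mp h'.symm))
      have hz1 : e.symm (ofAdd z.toAdd.1) = 1 := by
        apply iterate_injective Fa e hta n
        rw [iterate_map_one]
        exact hu
      have hz2 : e'.symm (ofAdd z.toAdd.2) = 1 := by
        apply iterate_injective Fb e' htb n
        rw [iterate_map_one]
        exact hv
      have h1 : z.toAdd.1 = 0 := by
        have := e.symm.injective (hz1.trans (map_one e.symm).symm)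
        exact ofAdd.injective this
      have h2 : z.toAdd.2 = 0 := by
        have := e'.symm.injective (hz2.trans (map_one e'.symm).symm)
        exact ofAdd.injective this
      have : z.toAdd = 0 := Prod.ext h1 h2
      exact toAdd.injective this
    refine ⟨Φ.range, ?_, ⟨(MonoidHom.ofInjective hΦinj).symm⟩⟩
    rintro _ ⟨z, rfl⟩
    have hxa : ((e.symm (ofAdd z.toAdd.1) : K) : G) ∈ K ⊔ K' :=
      Subgroup.mem_sup_left (e.symm (ofAdd z.toAdd.1)).2
    have hxb : ((e'.symm (ofAdd z.toAdd.2) : K') : G) ∈ K ⊔ K' :=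
      Subgroup.mem_sup_right (e'.symm (ofAdd z.toAdd.2)).2
    apply Subgroup.mul_mem
    · apply Subgroup.subset_closure
      exact ⟨_, hxa, (engel_eq_iterate a hKn hcommK b hbK _ n).symm⟩
    · apply Subgroup.subset_closure
      exact ⟨_, hxb, (engel_eq_iterate' b hK'n hcommK' a haK' _ n).symm⟩
  · -- Part 2
    intro S hSink hproc
    obtain ⟨k, hk⟩ := hproc
    set H := (Subgroup.closure S).topologicalClosure with hHdef
    haveI hCK : CompactSpace K := isCompact_iff_compactSpace.mp (hKclosed.isCompact)
    haveI hCK' : CompactSpace K' := isCompact_iff_compactSpace.mp (hK'closed.isCompact)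
    have hce : Continuous (fun x : K => (e x).toAdd) := e_continuous e hcommK
    have hce' : Continuous (fun x : K' => (e' x).toAdd) := e_continuous e' hcommK'
    let homK : K ≃ₜ ℤ_[p] :=
      Continuous.homeoOfEquivCompactToT2 (f := e.toEquiv.trans Multiplicative.toAdd) hce
    let homK' : K' ≃ₜ ℤ_[p] :=
      Continuous.homeoOfEquivCompactToT2 (f := e'.toEquiv.trans Multiplicative.toAdd) hce'
    set σ : ℤ_[p] → G := fun z => ((e.symm (ofAdd z) : K) : G) with hσdef
    set σ' : ℤ_[p] → G := fun z => ((e'.symm (ofAdd z) : K') : G) with hσ'def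
    have hσcont : Continuous σ := continuous_subtype_val.comp homK.symm.continuous
    have hσ'cont : Continuous σ' := continuous_subtype_val.comp homK'.symm.continuous
    set ρ : ℤ_[p] × ℤ_[p] → G := fun z => σ z.1 * σ' z.2 with hρdef
    have hρcont : Continuous ρ := (hσcont.comp continuous_fst).mul (hσ'cont.comp continuous_snd)
    have hσmem : ∀ z, σ z ∈ K := fun z => (e.symm (ofAdd z)).2
    have hσ'mem : ∀ z, σ' z ∈ K' := fun z => (e'.symm (ofAdd z)).2
    have hσmul : ∀ z w, σ (z + w) = σ z * σ w := by
      intro z w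
      show ((e.symm (ofAdd (z + w)) : K) : G) = _
      rw [ofAdd_add, map_mul]
      rfl
    have hσ'mul : ∀ z w, σ' (z + w) = σ' z * σ' w := by
      intro z w
      show ((e'.symm (ofAdd (z + w)) : K') : G) = _
      rw [ofAdd_add, map_mul]
      rfl
    have hρmul : ∀ z w : ℤ_[p] × ℤ_[p], ρ (z + w) = ρ z * ρ w := by
      intro z w
      show σ (z.1 + w.1) * σ' (z.2 + w.2) = σ z.1 * σ' z.2 * (σ w.1 * σ' w.2)
      rw [hσmul, hσ'mul]
      have hsw : σ' z.2 * σ w.1 = σ w.1 * σ' z.2 :=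
        (hcommKK' _ (hσmem w.1) _ (hσ'mem z.2)).symm
      calc σ z.1 * σ w.1 * (σ' z.2 * σ' w.2)
          = σ z.1 * (σ w.1 * σ' z.2) * σ' w.2 := by group
        _ = σ z.1 * (σ' z.2 * σ w.1) * σ' w.2 := by rw [hsw]
        _ = σ z.1 * σ' z.2 * (σ w.1 * σ' w.2) := by group
    have hρ0 : ρ 0 = 1 := by
      show σ 0 * σ' 0 = 1
      have h1 : σ 0 = 1 := by
        show ((e.symm (ofAdd 0) : K) : G) = 1
        rw [ofAdd_zero, map_one]
        rfl
      have h2 : σ' 0 = 1 := by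
        show ((e'.symm (ofAdd 0) : K') : G) = 1
        rw [ofAdd_zero, map_one]
        rfl
      rw [h1, h2, mul_one]
    have hρneg : ∀ z, ρ (-z) = (ρ z)⁻¹ := by
      intro z
      have h := hρmul z (-z)
      rw [add_neg_cancel, hρ0] at h
      exact (eq_inv_of_mul_eq_one_right h.symm)
    have hρnsmul : ∀ (z : ℤ_[p] × ℤ_[p]) (i : ℕ), ρ (i • z) = ρ z ^ i := by
      intro z i
      induction i with
      | zero => simpa using hρ0
      | succ i ih => rw [succ_nsmul, hρmul, ih, pow_succ]
    have hρzsmul : ∀ (z : ℤ_[p] × ℤ_[p]) (m : ℤ), ρ (m • z) = ρ z ^ m := by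
      intro z m
      rcases m with i | i
      · rw [Int.ofNat_eq_coe, natCast_zsmul, zpow_natCast]
        exact hρnsmul z i
      · rw [Int.negSucc_eq, show ((i : ℤ) + 1) = ((i + 1 : ℕ) : ℤ) by push_cast; ring,
          neg_zsmul, hρneg, natCast_zsmul, hρnsmul, zpow_neg, zpow_natCast]
    have hρinj : Function.Injective ρ := by
      intro z w h
      have h1 : (σ w.1)⁻¹ * σ z.1 = σ' w.2 * (σ' z.2)⁻¹ := by
        have h' : σ z.1 * σ' z.2 = σ w.1 * σ' w.2 := h
        calc (σ w.1)⁻¹ * σ z.1 = (σ w.1)⁻¹ * (σ z.1 * σ' z.2) * (σ' z.2)⁻¹ := by group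
          _ = (σ w.1)⁻¹ * (σ w.1 * σ' w.2) * (σ' z.2)⁻¹ := by rw [h']
          _ = σ' w.2 * (σ' z.2)⁻¹ := by group
      have hmem : (σ w.1)⁻¹ * σ z.1 ∈ K ⊓ K' :=
        ⟨K.mul_mem (K.inv_mem (hσmem _)) (hσmem _), by
          rw [h1]; exact K'.mul_mem (hσ'mem _) (K'.inv_mem (hσ'mem _))⟩
      rw [hdisj] at hmem
      have h2 : σ z.1 = σ w.1 := by
        have h0 : (σ w.1)⁻¹ * σ z.1 = 1 := by simpa [Subgroup.mem_bot] using hmem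
        exact (inv_mul_eq_one.mp h0).symm
      have h3 : σ' z.2 = σ' w.2 := by
        have h' : σ z.1 * σ' z.2 = σ w.1 * σ' w.2 := h
        rw [h2] at h'
        exact mul_left_cancel h'
      have hz1 : z.1 = w.1 :=
        ofAdd.injective (e.symm.injective (Subtype.ext h2))
      have hz2 : z.2 = w.2 :=
        ofAdd.injective (e'.symm.injective (Subtype.ext h3))
      exact Prod.ext hz1 hz2
    -- elements of the sink
    obtain ⟨Nu, hNu⟩ := hSink ((e.symm (ofAdd 1) : K) : G)
    obtain ⟨Nv, hNv⟩ := hSink ((e'.symm (ofAdd 1) : K') : G)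
    set u : K := (⇑Fa)^[Nu] (e.symm (ofAdd 1)) with hudef
    set v : K' := (⇑Fb)^[Nv] (e'.symm (ofAdd 1)) with hvdef
    have huS : (u : G) ∈ S := by
      have h := hNu Nu le_rfl
      rwa [engel_eq_iterate a hKn hcommK b hbK _ Nu] at h
    have hvS : (v : G) ∈ S := by
      have h := hNv Nv le_rfl
      rwa [engel_eq_iterate' b hK'n hcommK' a haK' _ Nv] at h
    set u₁ : ℤ_[p] := (e u).toAdd with hu₁def
    set v₂ : ℤ_[p] := (e' v).toAdd with hv₂def
    have hu₁ : u₁ ≠ 0 := by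
      have h := psiOf_iterate Fa e Nu (e.symm (ofAdd 1))
      rw [MulEquiv.apply_symm_apply, toAdd_ofAdd, mul_one] at h
      rw [hu₁def, hudef, h]
      exact pow_ne_zero _ hta
    have hv₂ : v₂ ≠ 0 := by
      have h := psiOf_iterate Fb e' Nv (e'.symm (ofAdd 1))
      rw [MulEquiv.apply_symm_apply, toAdd_ofAdd, mul_one] at h
      rw [hv₂def, hvdef, h]
      exact pow_ne_zero _ htb
    have hσu : σ u₁ = (u : G) := by
      show ((e.symm (ofAdd ((e u).toAdd)) : K) : G) = (u : G)
      rw [ofAdd_toAdd, MulEquiv.symm_apply_apply]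
    have hσ'v : σ' v₂ = (v : G) := by
      show ((e'.symm (ofAdd ((e' v).toAdd)) : K') : G) = (v : G)
      rw [ofAdd_toAdd, MulEquiv.symm_apply_apply]
    have huH : (u : G) ∈ H := Subgroup.le_topologicalClosure _ (Subgroup.subset_closure huS)
    have hvH : (v : G) ∈ H := Subgroup.le_topologicalClosure _ (Subgroup.subset_closure hvS)
    have hHclosed : IsClosed (H : Set G) := Subgroup.isClosed_topologicalClosure _
    have hρu : ρ (u₁, 0) = (u : G) := by
      show σ u₁ * σ' 0 = (u : G)
      have h2 : σ' 0 = 1 := by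
        show ((e'.symm (ofAdd 0) : K') : G) = 1
        rw [ofAdd_zero, map_one]; rfl
      rw [hσu, h2, mul_one]
    have hρv : ρ (0, v₂) = (v : G) := by
      show σ 0 * σ' v₂ = (v : G)
      have h1 : σ 0 = 1 := by
        show ((e.symm (ofAdd 0) : K) : G) = 1
        rw [ofAdd_zero, map_one]; rfl
      rw [hσ'v, h1, one_mul]
    have hzint : ∀ (m n' : ℤ), ρ (u₁ * (m : ℤ_[p]), v₂ * (n' : ℤ_[p])) ∈ H := by
      intro m n'
      have h1 : (u₁ * (m : ℤ_[p]), v₂ * (n' : ℤ_[p])) = m • ((u₁, 0) : ℤ_[p] × ℤ_[p]) + n' • ((0, v₂) : ℤ_[p] × ℤ_[p]) := by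
        simp only [Prod.smul_def, zsmul_eq_mul, Prod.mk_add_mk, Prod.mk.injEq]
        constructor <;> ring
      rw [h1, hρmul, hρzsmul, hρzsmul, hρu, hρv]
      exact H.mul_mem (H.zpow_mem huH m) (H.zpow_mem hvH n')
    have hspan : ∀ z w : ℤ_[p], ρ (u₁ * z, v₂ * w) ∈ H := by
      intro z w
      set T : Set G := {g | ∃ m n' : ℤ, g = ρ (u₁ * (m : ℤ_[p]), v₂ * (n' : ℤ_[p]))} with hTdef
      have hTH : T ⊆ (H : Set G) := by
        rintro g ⟨m, n', rfl⟩
        exact hzint m n'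
      set f : ℤ_[p] × ℤ_[p] → G := fun c => ρ (u₁ * c.1, v₂ * c.2) with hfdef
      have hfc : Continuous f := hρcont.comp
        ((continuous_const.mul continuous_fst).prodMk (continuous_const.mul continuous_snd))
      have hzw : ((z, w) : ℤ_[p] × ℤ_[p]) ∈
          closure ((Set.range ((↑) : ℤ → ℤ_[p])) ×ˢ (Set.range ((↑) : ℤ → ℤ_[p]))) := by
        rw [closure_prod_eq]
        exact ⟨PadicInt.denseRange_intCast z, PadicInt.denseRange_intCast w⟩
      have himg : f '' ((Set.range ((↑) : ℤ → ℤ_[p])) ×ˢ (Set.range ((↑) : ℤ → ℤ_[p]))) ⊆ T := by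
        rintro _ ⟨⟨c, d⟩, ⟨⟨m, rfl⟩, ⟨n', rfl⟩⟩, rfl⟩
        exact ⟨m, n', rfl⟩
      have hmem : f (z, w) ∈ closure T :=
        closure_mono himg (image_closure_subset_closure_image hfc ⟨(z, w), hzw, rfl⟩)
      have : f (z, w) ∈ (H : Set G) := by
        have h2 : closure T ⊆ (H : Set G) := by
          rw [← hHclosed.closure_eq]
          exact closure_mono hTH
        exact h2 hmem
      exact this
    -- a power of p divisible by both u₁ and v₂
    have hud : ∃ γ : ℕ, u₁ ∣ (p : ℤ_[p]) ^ γ := dvd_pow_p hu₁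
    have hvd : ∃ γ : ℕ, v₂ ∣ (p : ℤ_[p]) ^ γ := dvd_pow_p hv₂
    obtain ⟨γ₁, hγ₁⟩ := hud
    obtain ⟨γ₂, hγ₂⟩ := hvd
    set γ : ℕ := γ₁ + γ₂ with hγdef
    have hu_dvd : u₁ ∣ (p : ℤ_[p]) ^ γ := hγ₁.trans (pow_dvd_pow _ (Nat.le_add_right _ _))
    have hv_dvd : v₂ ∣ (p : ℤ_[p]) ^ γ := hγ₂.trans (pow_dvd_pow _ (Nat.le_add_left _ _))
    set u' : G := ρ ((p : ℤ_[p]) ^ γ, 0) with hu'def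
    set v' : G := ρ (0, (p : ℤ_[p]) ^ γ) with hv'def
    have hu'H : u' ∈ H := by
      obtain ⟨c, hc⟩ := hu_dvd
      have h := hspan c 0
      rw [mul_zero] at h
      rwa [hu'def, hc]
    have hv'H : v' ∈ H := by
      obtain ⟨c, hc⟩ := hv_dvd
      have h := hspan 0 c
      rw [mul_zero] at h
      rwa [hv'def, hc]
    have hu'pow : ∀ i : ℕ, u' ^ i = ρ ((i : ℤ_[p]) * (p : ℤ_[p]) ^ γ, 0) := by
      intro i
      rw [hu'def, ← hρnsmul]
      congr 1
      simp [Prod.smul_def, nsmul_eq_mul]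
    have hv'pow : ∀ j : ℕ, v' ^ j = ρ (0, (j : ℤ_[p]) * (p : ℤ_[p]) ^ γ) := by
      intro j
      rw [hv'def, ← hρnsmul]
      congr 1
      simp [Prod.smul_def, nsmul_eq_mul]
    have hu'v'pow : ∀ i j : ℕ, u' ^ i * v' ^ j
        = ρ ((i : ℤ_[p]) * (p : ℤ_[p]) ^ γ, (j : ℤ_[p]) * (p : ℤ_[p]) ^ γ) := by
      intro i j
      rw [hu'pow, hv'pow, ← hρmul]
      congr 1
      simp
    -- the closed set of p-th powers
    set Aset : Set ℤ_[p] := Set.range (fun c : ℤ_[p] => (p : ℤ_[p]) ^ (γ + 1) * c) with hAdef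
    have hA0 : (0 : ℤ_[p]) ∈ Aset := ⟨0, mul_zero _⟩
    set Pset : Set G := ρ '' (Aset ×ˢ Aset) with hPdef
    have hPclosed : IsClosed Pset := by
      have hc1 : IsCompact Aset := isCompact_range (continuous_const.mul continuous_id)
      exact ((hc1.prod hc1).image hρcont).isClosed
    have hPmul : ∀ g h' : G, g ∈ Pset → h' ∈ Pset → g * h' ∈ Pset := by
      rintro _ _ ⟨x, ⟨⟨c, hc⟩, ⟨d, hd⟩⟩, rfl⟩ ⟨y, ⟨⟨c', hc'⟩, ⟨d', hd'⟩⟩, rfl⟩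
      dsimp only at hc hd hc' hd'
      refine ⟨x + y, ⟨⟨c + c', ?_⟩, ⟨d + d', ?_⟩⟩, hρmul x y⟩
      · show (p : ℤ_[p]) ^ (γ + 1) * (c + c') = (x + y).1
        rw [Prod.fst_add, ← hc, ← hc']; ring
      · show (p : ℤ_[p]) ^ (γ + 1) * (d + d') = (x + y).2
        rw [Prod.snd_add, ← hd, ← hd']; ring
    have hPinv : ∀ g : G, g ∈ Pset → g⁻¹ ∈ Pset := by
      rintro _ ⟨x, ⟨⟨c, hc⟩, ⟨d, hd⟩⟩, rfl⟩
      dsimp only at hc hd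
      refine ⟨-x, ⟨⟨-c, ?_⟩, ⟨-d, ?_⟩⟩, hρneg x⟩
      · show (p : ℤ_[p]) ^ (γ + 1) * (-c) = (-x).1
        rw [Prod.fst_neg, ← hc]; ring
      · show (p : ℤ_[p]) ^ (γ + 1) * (-d) = (-x).2
        rw [Prod.snd_neg, ← hd]; ring
    have hpne : ((p : ℤ_[p])) ≠ 0 := Nat.cast_ne_zero.mpr (Fact.out : p.Prime).ne_zero
    have hPavoid : ∀ i j : ℕ, i < p → j < p → ¬(i = 0 ∧ j = 0) →
        u' ^ i * v' ^ j ∉ Pset := by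
      intro i j hi hj hnz hmem
      rw [hu'v'pow] at hmem
      obtain ⟨⟨x1, x2⟩, ⟨⟨c, hc⟩, ⟨d, hd⟩⟩, heq⟩ := hmem
      dsimp only at hc hd
      have hpair := hρinj heq
      have h1 : (p : ℤ_[p]) ^ (γ + 1) * c = (i : ℤ_[p]) * (p : ℤ_[p]) ^ γ := by
        rw [hc]; exact congrArg Prod.fst hpair
      have h2 : (p : ℤ_[p]) ^ (γ + 1) * d = (j : ℤ_[p]) * (p : ℤ_[p]) ^ γ := by
        rw [hd]; exact congrArg Prod.snd hpair
      have hγne : ((p : ℤ_[p]) ^ γ) ≠ 0 := pow_ne_zero _ hpne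
      have hi' : (i : ℤ_[p]) = (p : ℤ_[p]) * c := by
        apply mul_right_cancel₀ hγne
        rw [← h1]; ring
      have hj' : (j : ℤ_[p]) = (p : ℤ_[p]) * d := by
        apply mul_right_cancel₀ hγne
        rw [← h2]; ring
      have hdvd_i : ((i : ℕ) : ZMod p) = 0 := by
        have := congrArg (PadicInt.toZMod) hi'
        rw [map_natCast, map_mul, map_natCast, ZMod.natCast_self, zero_mul] at this
        exact this
      have hdvd_j : ((j : ℕ) : ZMod p) = 0 := by
        have := congrArg (PadicInt.toZMod) hj'
        rw [map_natCast, map_mul, map_natCast, ZMod.natCast_self, zero_mul] at this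
        exact this
      have hpi : p ∣ i := (ZMod.natCast_eq_zero_iff i p).mp hdvd_i
      have hpj : p ∣ j := (ZMod.natCast_eq_zero_iff j p).mp hdvd_j
      have hi0 : i = 0 := by
        rcases Nat.eq_zero_or_pos i with h | h
        · exact h
        · exact absurd (Nat.le_of_dvd h hpi) (not_le.mpr hi)
      have hj0 : j = 0 := by
        rcases Nat.eq_zero_or_pos j with h | h
        · exact h
        · exact absurd (Nat.le_of_dvd h hpj) (not_le.mpr hj)
      exact hnz ⟨hi0, hj0⟩
    -- choice of open normal subgroup
    set bad : Finset (ℕ × ℕ) := ((Finset.range p) ×ˢ (Finset.range p)).erase (0, 0) with hbaddef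
    have hbadmem : ∀ i j : ℕ, i < p → j < p → ¬(i = 0 ∧ j = 0) → ((i, j) : ℕ × ℕ) ∈ bad := by
      intro i j hi hj hnz
      rw [hbaddef, Finset.mem_erase]
      constructor
      · intro hEq
        rw [Prod.ext_iff] at hEq
        exact hnz ⟨hEq.1, hEq.2⟩
      · rw [Finset.mem_product]
        exact ⟨Finset.mem_range.mpr hi, Finset.mem_range.mpr hj⟩
    set Vset : Set G := ⋂ ij ∈ bad, {g : G | (u' ^ ij.1 * v' ^ ij.2) * g ∉ Pset} with hVdef
    have hVopen : IsOpen Vset := by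
      apply isOpen_biInter_finset
      intro ij _
      have : {g : G | (u' ^ ij.1 * v' ^ ij.2) * g ∉ Pset}
          = (fun g : G => (u' ^ ij.1 * v' ^ ij.2) * g) ⁻¹' Psetᶜ := rfl
      rw [this]
      exact hPclosed.isOpen_compl.preimage (continuous_mul_left _)
    have h1V : (1 : G) ∈ Vset := by
      rw [hVdef, Set.mem_iInter₂]
      intro ij hij
      rw [hbaddef, Finset.mem_erase, Finset.mem_product] at hij
      have hne : ¬(ij.1 = 0 ∧ ij.2 = 0) := by
        intro hEq
        exact hij.1 (Prod.ext hEq.1 hEq.2)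
      simp only [Set.mem_setOf_eq, mul_one]
      exact hPavoid ij.1 ij.2 (Finset.mem_range.mp hij.2.1) (Finset.mem_range.mp hij.2.2) hne
    obtain ⟨N, hNV⟩ := exists_openNormal hVopen h1V
    set Nsub : Subgroup G := N.toOpenSubgroup.toSubgroup with hNdef
    haveI hNnormal : Nsub.Normal := N.isNormal'
    set C : Subgroup G := Subgroup.closure {k} with hCdef
    have hYopen : IsOpen ((C ⊔ Nsub : Subgroup G) : Set G) :=
      Subgroup.isOpen_mono (le_sup_right : Nsub ≤ C ⊔ Nsub) N.toOpenSubgroup.isOpen'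
    have hYclosed : IsClosed ((C ⊔ Nsub : Subgroup G) : Set G) :=
      Subgroup.isClosed_of_isOpen _ hYopen
    have hHY : H ≤ C ⊔ Nsub := by
      rw [← hk]
      exact Subgroup.topologicalClosure_minimal _ (le_sup_left.trans (le_refl _) :
        Subgroup.closure {k} ≤ C ⊔ Nsub) hYclosed
    have hu'Y : u' ∈ (C : Set G) * (Nsub : Set G) := by
      rw [← Subgroup.mul_normal]
      exact hHY hu'H
    have hv'Y : v' ∈ (C : Set G) * (Nsub : Set G) := by
      rw [← Subgroup.mul_normal]
      exact hHY hv'H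
    obtain ⟨w₁, hw₁, ν₁, hν₁, hweq₁⟩ := hu'Y
    obtain ⟨w₂, hw₂, ν₂ν, hν₂, hweq₂⟩ := hv'Y
    obtain ⟨m, hm⟩ := Subgroup.mem_closure_singleton.mp hw₁
    obtain ⟨l, hl⟩ := Subgroup.mem_closure_singleton.mp hw₂
    set π : G →* G ⧸ Nsub := QuotientGroup.mk' Nsub with hπdef
    have hπν₁ : π ν₁ = 1 := (QuotientGroup.eq_one_iff ν₁).mpr hν₁
    have hπν₂ : π ν₂ν = 1 := (QuotientGroup.eq_one_iff ν₂ν).mpr hν₂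
    have hπu' : π u' = (π k) ^ m := by
      rw [← hweq₁, map_mul, hπν₁, mul_one, ← hm, map_zpow]
    have hπv' : π v' = (π k) ^ l := by
      rw [← hweq₂, map_mul, hπν₂, mul_one, ← hl, map_zpow]
    obtain ⟨i, j, hi, hj, hnz, x, y, hxy⟩ := exists_dependency p m l
    set W0 : Subgroup G := Subgroup.closure {u' ^ p, v' ^ p} with hW0def
    have hπmem : π (u' ^ i * v' ^ j) ∈ Subgroup.map π W0 := by
      have hg : π (u' ^ i * v' ^ j) = (π k) ^ ((i : ℤ) * m + (j : ℤ) * l) := by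
        rw [map_mul, map_pow, map_pow, hπu', hπv', ← zpow_natCast ((π k) ^ m) i,
          ← zpow_natCast ((π k) ^ l) j, ← zpow_mul, ← zpow_mul, ← zpow_add]
        congr 1
        ring
      have hppow : ∀ t : ℤ, ((π k) ^ ((p : ℤ) * t * x) : G ⧸ Nsub) = (π ((ρ ((p:ℤ_[p])^γ, 0)) ^ p)) ^ x → True := fun _ _ => trivial
      have hu'p : π (u' ^ p) = (π k) ^ (m * (p : ℤ)) := by
        rw [map_pow, hπu', ← zpow_natCast ((π k) ^ m) p, ← zpow_mul]
      have hv'p : π (v' ^ p) = (π k) ^ (l * (p : ℤ)) := by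
        rw [map_pow, hπv', ← zpow_natCast ((π k) ^ l) p, ← zpow_mul]
      have hsplit : (π k) ^ ((i : ℤ) * m + (j : ℤ) * l)
          = (π (u' ^ p)) ^ x * (π (v' ^ p)) ^ y := by
        rw [hu'p, hv'p, ← zpow_mul, ← zpow_mul, ← zpow_add]
        rw [hxy]
        congr 1
        ring
      rw [hg, hsplit]
      have hu'pW : u' ^ p ∈ W0 := Subgroup.subset_closure (by simp)
      have hv'pW : v' ^ p ∈ W0 := Subgroup.subset_closure (by simp)
      exact Subgroup.mul_mem _
        (Subgroup.zpow_mem _ (Subgroup.mem_map_of_mem π hu'pW) x)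
        (Subgroup.zpow_mem _ (Subgroup.mem_map_of_mem π hv'pW) y)
    have hfinal : u' ^ i * v' ^ j ∈ W0 ⊔ Nsub := by
      have h := Subgroup.mem_comap.mpr hπmem
      rwa [Subgroup.comap_map_eq, QuotientGroup.ker_mk'] at h
    have hmemmul : u' ^ i * v' ^ j ∈ (W0 : Set G) * (Nsub : Set G) := by
      rw [← Subgroup.mul_normal]
      exact hfinal
    obtain ⟨q, hq, ν₀, hν₀, hqν⟩ := hmemmul
    have hW0P : (W0 : Set G) ⊆ Pset := by
      have hsub : ({u' ^ p, v' ^ p} : Set G) ⊆ Pset := by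
        intro g hg
        rcases hg with hg | hg
        · rw [hg, hu'pow p]
          exact ⟨(((p : ℕ) : ℤ_[p]) * (p : ℤ_[p]) ^ γ, 0), ⟨⟨1, by push_cast; ring⟩, hA0⟩, rfl⟩
        · rw [Set.mem_singleton_iff.mp hg, hv'pow p]
          exact ⟨(0, ((p : ℕ) : ℤ_[p]) * (p : ℤ_[p]) ^ γ), ⟨hA0, ⟨1, by push_cast; ring⟩⟩, rfl⟩
      intro g hg
      induction hg using Subgroup.closure_induction with
      | mem g hgmem => exact hsub hgmem
      | one => exact ⟨(0, 0), ⟨hA0, hA0⟩, hρ0⟩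
      | mul g h' _ _ hg hh => exact hPmul g h' hg hh
      | inv g _ hg => exact hPinv g hg
    have hqP : q ∈ Pset := hW0P hq
    have hν₀inv : ν₀⁻¹ ∈ Vset := hNV (Nsub.inv_mem hν₀)
    have hcontr : (u' ^ i * v' ^ j) * ν₀⁻¹ ∉ Pset := by
      rw [hVdef, Set.mem_iInter₂] at hν₀inv
      exact hν₀inv (i, j) (hbadmem i j hi hj hnz)
    apply hcontr
    have : (u' ^ i * v' ^ j) * ν₀⁻¹ = q := by rw [← hqν]; group
    rw [this]
    exact hqP
end
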